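/- arXiv:2301.08672 — 3 statements merged into one kernel-verified Lean document; each statement's English description precedes it below -/
import Mathlib

section
/- Let L be a regular-epi localization functor on XMod. Then L is conditionally flat if and only if for every short exact sequence 1 → N → T → Q → 1 of crossed modules in which N, T and Q are all L-local, the pullback sequence along any morphism Q' → Q is L-flat. -/
set_option linter.unusedVariables false

/-- A crossed module of groups `(M, G, d)` with `G` acting on `M`. -/
structure XMod : Type 1 where
  M : Type
  G : Type
  [grpM : Group M]
  [grpG : Group G]
  act : G →* MulAut M
  d : M →* G
  act_d : ∀ (b : G) (t : M), d (act b t) = b * d t * b⁻¹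
  peiffer : ∀ (t s : M), act (d t) s = t * s * t⁻¹

attribute [instance] XMod.grpM XMod.grpG

/-- A morphism of crossed modules. -/
structure XModHom (N T : XMod) where
  f1 : N.M →* T.M
  f2 : N.G →* T.G
  comm_d : ∀ n, T.d (f1 n) = f2 (N.d n)
  equiv : ∀ (b : N.G) (n : N.M), f1 (N.act b n) = T.act (f2 b) (f1 n)

namespace XModHom

theorem ext {N T : XMod} {f g : XModHom N T} (h1 : f.f1 = g.f1) (h2 : f.f2 = g.f2) :
    f = g := by
  cases f; cases g; cases h1; cases h2; rfl

/-- The identity morphism. -/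
def id (T : XMod) : XModHom T T :=
  ⟨MonoidHom.id _, MonoidHom.id _, fun _ => rfl, fun _ _ => rfl⟩

/-- Composition of morphisms of crossed modules. -/
def comp {A B C : XMod} (g : XModHom B C) (f : XModHom A B) : XModHom A C where
  f1 := g.f1.comp f.f1
  f2 := g.f2.comp f.f2
  comm_d := by intro n; simp [MonoidHom.comp_apply, g.comm_d, f.comm_d]
  equiv := by intro b n; simp [MonoidHom.comp_apply, f.equiv, g.equiv]

/-- The trivial morphism of crossed modules. -/
def triv (A B : XMod) : XModHom A B where
  f1 := 1
  f2 := 1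
  comm_d := by intro n; simp
  equiv := by intro b n; simp

/-- A morphism of crossed modules is an isomorphism if it has a two-sided inverse. -/
def IsIso {A B : XMod} (f : XModHom A B) : Prop :=
  ∃ g : XModHom B A, comp g f = id A ∧ comp f g = id B

/-- Regular epimorphisms of crossed modules are exactly the componentwise
surjective morphisms. -/
def RegEpi {A B : XMod} (f : XModHom A B) : Prop :=
  Function.Surjective f.f1 ∧ Function.Surjective f.f2

/-- `κ` is a kernel of `α` (in the categorical sense). -/
def IsKernelOf {N T Q : XMod} (κ : XModHom N T) (α : XModHom T Q) : Prop :=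
  comp α κ = triv N Q ∧
    ∀ (X : XMod) (u : XModHom X T), comp α u = triv X Q →
      ∃! v : XModHom X N, comp κ v = u

end XModHom

/-- `1 → N → T → Q → 1` is a short exact sequence of crossed modules. -/
def ShortExact {N T Q : XMod} (κ : XModHom N T) (α : XModHom T Q) : Prop :=
  XModHom.IsKernelOf κ α ∧ XModHom.RegEpi α
/-- A localization functor (coaugmented idempotent functor) on `XMod`. -/
structure LocalizationFunctor where
  obj : XMod → XMod
  map : ∀ {A B : XMod}, XModHom A B → XModHom (obj A) (obj B)
  map_id : ∀ A : XMod, map (XModHom.id A) = XModHom.id (obj A)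
  map_comp : ∀ {A B C : XMod} (f : XModHom A B) (g : XModHom B C),
    map (XModHom.comp g f) = XModHom.comp (map g) (map f)
  ell : ∀ A : XMod, XModHom A (obj A)
  natural : ∀ {A B : XMod} (f : XModHom A B),
    XModHom.comp (ell B) f = XModHom.comp (map f) (ell A)
  iso_ell_obj : ∀ A : XMod, XModHom.IsIso (ell (obj A))
  iso_map_ell : ∀ A : XMod, XModHom.IsIso (map (ell A))

namespace LocalizationFunctor

/-- A crossed module is `L`-local if its coaugmentation is an isomorphism. -/
def IsLocal (L : LocalizationFunctor) (X : XMod) : Prop :=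
  XModHom.IsIso (L.ell X)

/-- `L` is a regular-epi localization if every coaugmentation morphism is a
regular epimorphism. -/
def RegEpiLoc (L : LocalizationFunctor) : Prop :=
  ∀ X : XMod, XModHom.RegEpi (L.ell X)

/-- A short exact sequence is `L`-flat if applying `L` yields a short exact sequence. -/
def LFlat (L : LocalizationFunctor) {N T Q : XMod} (κ : XModHom N T) (α : XModHom T Q) : Prop :=
  ShortExact (L.map κ) (L.map α)

end LocalizationFunctor
section Pullback

variable {T Q Q' : XMod} (α : XModHom T Q) (g : XModHom Q' Q)

/-- Level-1 part of the pullback `T ×_Q Q'`, computed componentwise. -/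
def pbM : Subgroup (T.M × Q'.M) where
  carrier := {p | α.f1 p.1 = g.f1 p.2}
  one_mem' := by simp
  mul_mem' := by
    intro a b ha hb
    simp only [Set.mem_setOf_eq, Prod.fst_mul, Prod.snd_mul, map_mul] at *
    rw [ha, hb]
  inv_mem' := by
    intro a ha
    simp only [Set.mem_setOf_eq, Prod.fst_inv, Prod.snd_inv, map_inv] at *
    rw [ha]

/-- Level-2 part of the pullback `T ×_Q Q'`, computed componentwise. -/
def pbG : Subgroup (T.G × Q'.G) where
  carrier := {p | α.f2 p.1 = g.f2 p.2}
  one_mem' := by simp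
  mul_mem' := by
    intro a b ha hb
    simp only [Set.mem_setOf_eq, Prod.fst_mul, Prod.snd_mul, map_mul] at *
    rw [ha, hb]
  inv_mem' := by
    intro a ha
    simp only [Set.mem_setOf_eq, Prod.fst_inv, Prod.snd_inv, map_inv] at *
    rw [ha]

theorem mem_pbM_iff (p : T.M × Q'.M) : p ∈ pbM α g ↔ α.f1 p.1 = g.f1 p.2 := Iff.rfl

theorem mem_pbG_iff (p : T.G × Q'.G) : p ∈ pbG α g ↔ α.f2 p.1 = g.f2 p.2 := Iff.rfl

theorem pb_act_mem {b : T.G × Q'.G} (hb : b ∈ pbG α g) {p : T.M × Q'.M}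
    (hp : p ∈ pbM α g) : (T.act b.1 p.1, Q'.act b.2 p.2) ∈ pbM α g := by
  have hb' : α.f2 b.1 = g.f2 b.2 := hb
  have hp' : α.f1 p.1 = g.f1 p.2 := hp
  show α.f1 (T.act b.1 p.1) = g.f1 (Q'.act b.2 p.2)
  rw [α.equiv, g.equiv, hb', hp']

theorem XMod.act_inv_act (X : XMod) (b : X.G) (t : X.M) :
    X.act b⁻¹ (X.act b t) = t := by
  rw [← MulAut.mul_apply, ← map_mul, inv_mul_cancel, map_one, MulAut.one_apply]

theorem XMod.act_act_inv (X : XMod) (b : X.G) (t : X.M) :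
    X.act b (X.act b⁻¹ t) = t := by
  rw [← MulAut.mul_apply, ← map_mul, mul_inv_cancel, map_one, MulAut.one_apply]

/-- The action of an element of the pullback on the level-1 part, as a group
automorphism. -/
def pbActEquiv (b : ↥(pbG α g)) : ↥(pbM α g) ≃* ↥(pbM α g) where
  toFun p := ⟨(T.act b.1.1 p.1.1, Q'.act b.1.2 p.1.2), pb_act_mem α g b.2 p.2⟩
  invFun p := ⟨(T.act b.1.1⁻¹ p.1.1, Q'.act b.1.2⁻¹ p.1.2),
    pb_act_mem α g ((pbG α g).inv_mem b.2) p.2⟩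
  left_inv p := by
    apply Subtype.ext
    exact Prod.ext (T.act_inv_act _ _) (Q'.act_inv_act _ _)
  right_inv p := by
    apply Subtype.ext
    exact Prod.ext (T.act_act_inv _ _) (Q'.act_act_inv _ _)
  map_mul' p q := by
    apply Subtype.ext
    exact Prod.ext (map_mul _ _ _) (map_mul _ _ _)

/-- The pullback `T ×_Q Q'` of `α : T → Q` along `g : Q' → Q`, computed
componentwise. -/
def pbXMod : XMod where
  M := ↥(pbM α g)
  G := ↥(pbG α g)
  act :=
    { toFun := pbActEquiv α g
      map_one' := by
        apply MulEquiv.ext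
        intro p
        apply Subtype.ext
        apply Prod.ext
        · show T.act (1 : ↥(pbG α g)).1.1 p.1.1 = p.1.1
          simp
        · show Q'.act (1 : ↥(pbG α g)).1.2 p.1.2 = p.1.2
          simp
      map_mul' := by
        intro b c
        apply MulEquiv.ext
        intro p
        apply Subtype.ext
        apply Prod.ext
        · show T.act (b * c).1.1 p.1.1 = T.act b.1.1 (T.act c.1.1 p.1.1)
          simp [map_mul]
        · show Q'.act (b * c).1.2 p.1.2 = Q'.act b.1.2 (Q'.act c.1.2 p.1.2)
          simp [map_mul] }
  d :=
    { toFun := fun p => ⟨(T.d p.1.1, Q'.d p.1.2), by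
        have hp : α.f1 p.1.1 = g.f1 p.1.2 := p.2
        show α.f2 (T.d p.1.1) = g.f2 (Q'.d p.1.2)
        rw [← α.comm_d, ← g.comm_d, hp]⟩
      map_one' := by
        apply Subtype.ext
        apply Prod.ext <;> simp
      map_mul' := by
        intro p q
        apply Subtype.ext
        apply Prod.ext <;> simp }
  act_d := by
    intro b p
    apply Subtype.ext
    apply Prod.ext
    · exact T.act_d _ _
    · exact Q'.act_d _ _
  peiffer := by
    intro p q
    apply Subtype.ext
    apply Prod.ext
    · exact T.peiffer _ _
    · exact Q'.peiffer _ _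

/-- First projection of the pullback. -/
def pbFst : XModHom (pbXMod α g) T where
  f1 := (MonoidHom.fst T.M Q'.M).comp (pbM α g).subtype
  f2 := (MonoidHom.fst T.G Q'.G).comp (pbG α g).subtype
  comm_d := fun _ => rfl
  equiv := fun _ _ => rfl

/-- Second projection of the pullback. -/
def pbSnd : XModHom (pbXMod α g) Q' where
  f1 := (MonoidHom.snd T.M Q'.M).comp (pbM α g).subtype
  f2 := (MonoidHom.snd T.G Q'.G).comp (pbG α g).subtype
  comm_d := fun _ => rfl
  equiv := fun _ _ => rfl

end Pullback
section PullbackMaps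

variable {N T Q Q' : XMod}

/-- The induced morphism from the kernel `N` into the pullback `T ×_Q Q'`. -/
def pbIn (κ : XModHom N T) (α : XModHom T Q) (g : XModHom Q' Q)
    (h : XModHom.comp α κ = XModHom.triv N Q) : XModHom N (pbXMod α g) where
  f1 :=
    { toFun := fun n => ⟨(κ.f1 n, 1), by
        show α.f1 (κ.f1 n) = g.f1 1
        have := congrArg XModHom.f1 h
        have h' : α.f1 (κ.f1 n) = 1 := DFunLike.congr_fun this n
        rw [h', map_one]⟩
      map_one' := by
        apply Subtype.ext
        apply Prod.ext <;> simp <;> first | rfl | exact map_one _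
      map_mul' := by
        intro a b
        apply Subtype.ext
        show (κ.f1 (a * b), (1 : Q'.M)) = (κ.f1 a, (1 : Q'.M)) * (κ.f1 b, (1 : Q'.M))
        simp [Prod.ext_iff, map_mul] }
  f2 :=
    { toFun := fun n => ⟨(κ.f2 n, 1), by
        show α.f2 (κ.f2 n) = g.f2 1
        have := congrArg XModHom.f2 h
        have h' : α.f2 (κ.f2 n) = 1 := DFunLike.congr_fun this n
        rw [h', map_one]⟩
      map_one' := by
        apply Subtype.ext
        apply Prod.ext <;> simp <;> first | rfl | exact map_one _
      map_mul' := by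
        intro a b
        apply Subtype.ext
        show (κ.f2 (a * b), (1 : Q'.G)) = (κ.f2 a, (1 : Q'.G)) * (κ.f2 b, (1 : Q'.G))
        simp [Prod.ext_iff, map_mul] }
  comm_d := by
    intro n
    apply Subtype.ext
    apply Prod.ext
    · exact κ.comm_d n
    · show Q'.d (1 : Q'.M) = 1
      simp
  equiv := by
    intro b n
    apply Subtype.ext
    apply Prod.ext
    · exact κ.equiv b n
    · show (1 : Q'.M) = Q'.act 1 1
      simp

/-- The induced morphism into the pullback `T ×_Q Q'` from an object mapping
trivially to `Q` through the second leg. -/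
def pbInR (α : XModHom T Q) (g : XModHom Q' Q) {X : XMod} (u : XModHom X Q')
    (h : XModHom.comp g u = XModHom.triv X Q) : XModHom X (pbXMod α g) where
  f1 :=
    { toFun := fun n => ⟨(1, u.f1 n), by
        show α.f1 1 = g.f1 (u.f1 n)
        have := congrArg XModHom.f1 h
        have h' : g.f1 (u.f1 n) = 1 := DFunLike.congr_fun this n
        rw [h', map_one]⟩
      map_one' := by
        apply Subtype.ext
        apply Prod.ext <;> simp <;> first | rfl | exact map_one _
      map_mul' := by
        intro a b
        apply Subtype.ext
        show ((1 : T.M), u.f1 (a * b)) = ((1 : T.M), u.f1 a) * ((1 : T.M), u.f1 b)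
        simp [Prod.ext_iff, map_mul] }
  f2 :=
    { toFun := fun n => ⟨(1, u.f2 n), by
        show α.f2 1 = g.f2 (u.f2 n)
        have := congrArg XModHom.f2 h
        have h' : g.f2 (u.f2 n) = 1 := DFunLike.congr_fun this n
        rw [h', map_one]⟩
      map_one' := by
        apply Subtype.ext
        apply Prod.ext <;> simp <;> first | rfl | exact map_one _
      map_mul' := by
        intro a b
        apply Subtype.ext
        show ((1 : T.G), u.f2 (a * b)) = ((1 : T.G), u.f2 a) * ((1 : T.G), u.f2 b)
        simp [Prod.ext_iff, map_mul] }
  comm_d := by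
    intro n
    apply Subtype.ext
    apply Prod.ext
    · show T.d (1 : T.M) = 1
      simp
    · exact u.comm_d n
  equiv := by
    intro b n
    apply Subtype.ext
    apply Prod.ext
    · show (1 : T.M) = T.act 1 1
      simp
    · exact u.equiv b n

/-- The morphism of pullbacks `T ×_Q Q' → E ×_Q Q'` induced by `f : T → E`
with `p ∘ f = α`. -/
def pbMapL {E : XMod} (α : XModHom T Q) (p : XModHom E Q) (g : XModHom Q' Q)
    (f : XModHom T E) (hpf : XModHom.comp p f = α) :
    XModHom (pbXMod α g) (pbXMod p g) where
  f1 :=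
    { toFun := fun w => ⟨(f.f1 w.1.1, w.1.2), by
        show p.f1 (f.f1 w.1.1) = g.f1 w.1.2
        have h' : p.f1 (f.f1 w.1.1) = α.f1 w.1.1 :=
          DFunLike.congr_fun (congrArg XModHom.f1 hpf) w.1.1
        rw [h']
        exact w.2⟩
      map_one' := by
        apply Subtype.ext
        apply Prod.ext <;> simp <;> first | rfl | exact map_one _
      map_mul' := by
        intro a b
        apply Subtype.ext
        apply Prod.ext
        · exact map_mul f.f1 a.1.1 b.1.1
        · rfl }
  f2 :=
    { toFun := fun w => ⟨(f.f2 w.1.1, w.1.2), by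
        show p.f2 (f.f2 w.1.1) = g.f2 w.1.2
        have h' : p.f2 (f.f2 w.1.1) = α.f2 w.1.1 :=
          DFunLike.congr_fun (congrArg XModHom.f2 hpf) w.1.1
        rw [h']
        exact w.2⟩
      map_one' := by
        apply Subtype.ext
        apply Prod.ext <;> simp <;> first | rfl | exact map_one _
      map_mul' := by
        intro a b
        apply Subtype.ext
        apply Prod.ext
        · exact map_mul f.f2 a.1.1 b.1.1
        · rfl }
  comm_d := by
    intro w
    apply Subtype.ext
    apply Prod.ext
    · exact f.comm_d _
    · rfl
  equiv := by
    intro b w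
    apply Subtype.ext
    apply Prod.ext
    · exact f.equiv _ _
    · rfl

end PullbackMaps

/-- A commuting square is a pullback square (categorical definition). -/
def IsPullbackSquare {P X Y Z : XMod} (p1 : XModHom P X) (p2 : XModHom P Y)
    (f : XModHom X Z) (h : XModHom Y Z) : Prop :=
  XModHom.comp f p1 = XModHom.comp h p2 ∧
    ∀ (W : XMod) (u : XModHom W X) (v : XModHom W Y),
      XModHom.comp f u = XModHom.comp h v →
        ∃! w : XModHom W P, XModHom.comp p1 w = u ∧ XModHom.comp p2 w = v

namespace LocalizationFunctor

/-- `L` is admissible for the class of regular epimorphisms: applying `L` to the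
pullback of a regular epimorphism `α : LT → LQ` along the coaugmentation
`ℓ^Q : Q → LQ` yields again a pullback square. -/
def Admissible (L : LocalizationFunctor) : Prop :=
  ∀ (T Q : XMod) (α : XModHom (L.obj T) (L.obj Q)), XModHom.RegEpi α →
    IsPullbackSquare (L.map (pbFst α (L.ell Q))) (L.map (pbSnd α (L.ell Q)))
      (L.map α) (L.map (L.ell Q))

/-- `L` is conditionally flat: the pullback of any `L`-flat short exact sequence
along any morphism is again `L`-flat. -/
def ConditionallyFlat (L : LocalizationFunctor) : Prop :=
  ∀ (N T Q : XMod) (κ : XModHom N T) (α : XModHom T Q) (hse : ShortExact κ α),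
    L.LFlat κ α →
      ∀ (Q' : XMod) (g : XModHom Q' Q),
        L.LFlat (pbIn κ α g hse.1.1) (pbSnd α g)

/-- A short exact sequence `1 → N → T → Q → 1` admits a fiberwise localization:
there is a short exact sequence `1 → LN → E → Q → 1` together with an
`L`-equivalence `T → E` compatible with the coaugmentation of `N`. -/
def AdmitsFiberwise (L : LocalizationFunctor) {N T Q : XMod} (κ : XModHom N T)
    (α : XModHom T Q) : Prop :=
  ∃ (E : XMod) (j : XModHom (L.obj N) E) (p : XModHom E Q) (e : XModHom T E),
    ShortExact j p ∧ XModHom.IsIso (L.map e) ∧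
      XModHom.comp e κ = XModHom.comp j (L.ell N) ∧ XModHom.comp p e = α

end LocalizationFunctor
section Kernel

variable {N T : XMod} (f : XModHom N T)

theorem ker_act_mem {b : N.G} (hb : b ∈ f.f2.ker) {n : N.M} (hn : n ∈ f.f1.ker) :
    N.act b n ∈ f.f1.ker := by
  have hb' : f.f2 b = 1 := hb
  have hn' : f.f1 n = 1 := hn
  show f.f1 (N.act b n) = 1
  rw [f.equiv, hb', hn', map_one]

/-- The automorphism of `ker f.f1` induced by an element of `ker f.f2`. -/
def kerActEquiv (b : ↥f.f2.ker) : ↥f.f1.ker ≃* ↥f.f1.ker where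
  toFun n := ⟨N.act b.1 n.1, ker_act_mem f b.2 n.2⟩
  invFun n := ⟨N.act b.1⁻¹ n.1, ker_act_mem f (f.f2.ker.inv_mem b.2) n.2⟩
  left_inv n := Subtype.ext (N.act_inv_act _ _)
  right_inv n := Subtype.ext (N.act_act_inv _ _)
  map_mul' n m := Subtype.ext (map_mul _ _ _)

/-- The kernel of a morphism of crossed modules, computed componentwise. -/
def kerXMod : XMod where
  M := ↥f.f1.ker
  G := ↥f.f2.ker
  act :=
    { toFun := kerActEquiv f
      map_one' := by
        apply MulEquiv.ext
        intro n
        apply Subtype.ext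
        show N.act (1 : ↥f.f2.ker).1 n.1 = n.1
        simp
      map_mul' := by
        intro b c
        apply MulEquiv.ext
        intro n
        apply Subtype.ext
        show N.act (b * c).1 n.1 = N.act b.1 (N.act c.1 n.1)
        simp [map_mul] }
  d :=
    { toFun := fun n => ⟨N.d n.1, by
        have hn : f.f1 n.1 = 1 := n.2
        show f.f2 (N.d n.1) = 1
        rw [← f.comm_d, hn, map_one]⟩
      map_one' := by
        apply Subtype.ext
        simp
      map_mul' := by
        intro a b
        apply Subtype.ext
        show N.d (a * b).1 = N.d a.1 * N.d b.1
        simp }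
  act_d := by
    intro b n
    apply Subtype.ext
    exact N.act_d _ _
  peiffer := by
    intro n m
    apply Subtype.ext
    exact N.peiffer _ _

/-- The inclusion of the kernel. -/
def kerIncl : XModHom (kerXMod f) N where
  f1 := f.f1.ker.subtype
  f2 := f.f2.ker.subtype
  comm_d := fun _ => rfl
  equiv := fun _ _ => rfl

end Kernel

/-- A crossed module is trivial if both underlying groups are trivial. -/
def XMod.IsTrivial (X : XMod) : Prop :=
  (∀ m : X.M, m = 1) ∧ ∀ b : X.G, b = 1

/-- `X` is `A`-null if the only morphism of crossed modules `A → X` is the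
trivial one. -/
def ANull (A X : XMod) : Prop :=
  ∀ φ : XModHom A X, φ = XModHom.triv A X

/-- `X` is `f`-local if precomposition with `f` is a bijection on morphisms
into `X`. -/
def FLocal {B C : XMod} (f : XModHom B C) (X : XMod) : Prop :=
  Function.Bijective fun φ : XModHom C X => XModHom.comp φ f

/-- The subgroup `[N₂, N₁]` of `N₁` generated by the elements `ᵇt·t⁻¹`. -/
def actCommutator (N : XMod) : Subgroup N.M :=
  Subgroup.closure {x | ∃ (b : N.G) (t : N.M), x = N.act b t * t⁻¹}

section NormalClosure

variable {A W : XMod} (φ : XModHom A W)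

/-- The level-2 part of the normal closure of the image of `φ`:
the normal closure of `φ₂(A₂)` in `W₂`. -/
def ncl2 : Subgroup W.G :=
  Subgroup.normalClosure (Set.range φ.f2)

/-- The level-1 part of the normal closure of the image of `φ`:
the subgroup `φ₁(A₁)^{W₂}·[φ₂(A₂)^{W₂}, W₁]` of `W₁`. -/
def ncl1 : Subgroup W.M :=
  Subgroup.closure
    ({x | ∃ (b : W.G) (m : A.M), x = W.act b (φ.f1 m)} ∪
      {x | ∃ s ∈ ncl2 φ, ∃ w : W.M, x = W.act s w * w⁻¹})

end NormalClosure

section CFProofAux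

open XModHom

theorem hom_ext' {A B : XMod} {f g : XModHom A B} (h1 : ∀ x, f.f1 x = g.f1 x)
    (h2 : ∀ x, f.f2 x = g.f2 x) : f = g :=
  XModHom.ext (MonoidHom.ext h1) (MonoidHom.ext h2)

theorem congr_f1 {A B : XMod} {f g : XModHom A B} (h : f = g) (x : A.M) :
    f.f1 x = g.f1 x := by rw [h]

theorem congr_f2 {A B : XMod} {f g : XModHom A B} (h : f = g) (x : A.G) :
    f.f2 x = g.f2 x := by rw [h]

theorem comp_assoc' {A B C D : XMod} (h : XModHom C D) (g : XModHom B C) (f : XModHom A B) :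
    comp (comp h g) f = comp h (comp g f) :=
  hom_ext' (fun _ => rfl) (fun _ => rfl)

theorem id_comp' {A B : XMod} (f : XModHom A B) : comp (XModHom.id B) f = f :=
  hom_ext' (fun _ => rfl) (fun _ => rfl)

theorem comp_id' {A B : XMod} (f : XModHom A B) : comp f (XModHom.id A) = f :=
  hom_ext' (fun _ => rfl) (fun _ => rfl)

theorem comp_triv' {A B C : XMod} (f : XModHom B C) :
    comp f (triv A B) = triv A C :=
  hom_ext' (fun _ => by show f.f1 1 = 1; simp) (fun _ => by show f.f2 1 = 1; simp)

theorem triv_comp' {A B C : XMod} (f : XModHom A B) :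
    comp (triv B C) f = triv A C :=
  hom_ext' (fun _ => rfl) (fun _ => rfl)

theorem cancel_left' {A B C : XMod} {e : XModHom B C} {j : XModHom C B}
    (hj : comp j e = XModHom.id B) {u v : XModHom A B}
    (h : comp e u = comp e v) : u = v := by
  have h2 : comp j (comp e u) = comp j (comp e v) := by rw [h]
  rwa [← comp_assoc', ← comp_assoc', hj, id_comp', id_comp'] at h2

/-- Components of an isomorphism are surjective. -/
theorem iso_surj1 {A B : XMod} {f : XModHom A B} (hf : IsIso f) :
    Function.Surjective f.f1 := by
  obtain ⟨j, _, hj2⟩ := hf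
  exact fun y => ⟨j.f1 y, congr_f1 hj2 y⟩

theorem iso_surj2 {A B : XMod} {f : XModHom A B} (hf : IsIso f) :
    Function.Surjective f.f2 := by
  obtain ⟨j, _, hj2⟩ := hf
  exact fun y => ⟨j.f2 y, congr_f2 hj2 y⟩

theorem iso_inj1 {A B : XMod} {f : XModHom A B} (hf : IsIso f) :
    Function.Injective f.f1 := by
  obtain ⟨j, hj1, _⟩ := hf
  intro a b hab
  have ha := congr_f1 hj1 a
  have hb := congr_f1 hj1 b
  calc a = j.f1 (f.f1 a) := ha.symm
  _ = j.f1 (f.f1 b) := by rw [hab]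
  _ = b := hb

theorem iso_inj2 {A B : XMod} {f : XModHom A B} (hf : IsIso f) :
    Function.Injective f.f2 := by
  obtain ⟨j, hj1, _⟩ := hf
  intro a b hab
  have ha := congr_f2 hj1 a
  have hb := congr_f2 hj1 b
  calc a = j.f2 (f.f2 a) := ha.symm
  _ = j.f2 (f.f2 b) := by rw [hab]
  _ = b := hb

/-- Elements of the kernel of `α` (level 1) lift to `N` along a categorical kernel. -/
theorem exists_ker1 {T Q N : XMod} {κ : XModHom N T} {α : XModHom T Q}
    (hk : IsKernelOf κ α) {t : T.M} (ht : α.f1 t = 1) : ∃ n, κ.f1 n = t := by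
  obtain ⟨v, hv, _⟩ := hk.2 (kerXMod α) (kerIncl α)
    (hom_ext' (fun x => x.2) (fun x => x.2))
  exact ⟨v.f1 ⟨t, ht⟩, congr_f1 hv ⟨t, ht⟩⟩

theorem exists_ker2 {T Q N : XMod} {κ : XModHom N T} {α : XModHom T Q}
    (hk : IsKernelOf κ α) {b : T.G} (hb : α.f2 b = 1) : ∃ n, κ.f2 n = b := by
  obtain ⟨v, hv, _⟩ := hk.2 (kerXMod α) (kerIncl α)
    (hom_ext' (fun x => x.2) (fun x => x.2))
  exact ⟨v.f2 ⟨b, hb⟩, congr_f2 hv ⟨b, hb⟩⟩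

/-- The factorization of `κ` through the componentwise kernel of `α`. -/
def kerFactor {T Q N : XMod} (κ : XModHom N T) (α : XModHom T Q)
    (h : comp α κ = triv N Q) : XModHom N (kerXMod α) where
  f1 :=
    { toFun := fun n => ⟨κ.f1 n, congr_f1 h n⟩
      map_one' := Subtype.ext (map_one _)
      map_mul' := fun a b => Subtype.ext (map_mul _ _ _) }
  f2 :=
    { toFun := fun n => ⟨κ.f2 n, congr_f2 h n⟩
      map_one' := Subtype.ext (map_one _)
      map_mul' := fun a b => Subtype.ext (map_mul _ _ _) }
  comm_d := fun n => Subtype.ext (κ.comm_d n)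
  equiv := fun b n => Subtype.ext (κ.equiv b n)

/-- A categorical kernel is componentwise injective. -/
theorem ker_inj1 {T Q N : XMod} {κ : XModHom N T} {α : XModHom T Q}
    (hk : IsKernelOf κ α) : Function.Injective κ.f1 := by
  obtain ⟨v, hv, _⟩ := hk.2 (kerXMod α) (kerIncl α)
    (hom_ext' (fun x => x.2) (fun x => x.2))
  obtain ⟨_, _, huniq⟩ := hk.2 N κ hk.1
  set w := kerFactor κ α hk.1 with hw
  have hkvw : comp κ (comp v w) = κ := by
    rw [← comp_assoc', hv]
    exact hom_ext' (fun _ => rfl) (fun _ => rfl)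
  have hvw : comp v w = XModHom.id N := by
    rw [huniq (comp v w) hkvw, ← huniq (XModHom.id N) (comp_id' κ)]
  intro a b hab
  have ha := congr_f1 hvw a
  have hb := congr_f1 hvw b
  have : w.f1 a = w.f1 b := Subtype.ext hab
  calc a = v.f1 (w.f1 a) := ha.symm
  _ = v.f1 (w.f1 b) := by rw [this]
  _ = b := hb

/-- Transfer of short exactness along isomorphisms of sequences. -/
theorem ses_transfer {N T Q N' T' Q' : XMod}
    {κ : XModHom N T} {α : XModHom T Q} {κ' : XModHom N' T'} {α' : XModHom T' Q'}
    {eN : XModHom N N'} {eT : XModHom T T'} {eQ : XModHom Q Q'}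
    (hN : IsIso eN) (hT : IsIso eT) (hQ : IsIso eQ)
    (sq1 : comp κ' eN = comp eT κ) (sq2 : comp α' eT = comp eQ α)
    (hse : ShortExact κ' α') : ShortExact κ α := by
  obtain ⟨jN, hjN1, hjN2⟩ := hN
  obtain ⟨jT, hjT1, hjT2⟩ := hT
  obtain ⟨jQ, hjQ1, hjQ2⟩ := hQ
  constructor
  · constructor
    · -- comp α κ = triv
      have h1 : comp eQ (comp α κ) = triv N Q' := by
        calc comp eQ (comp α κ) = comp (comp eQ α) κ := (comp_assoc' _ _ _).symm
        _ = comp (comp α' eT) κ := by rw [sq2]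
        _ = comp α' (comp eT κ) := comp_assoc' _ _ _
        _ = comp α' (comp κ' eN) := by rw [sq1]
        _ = comp (comp α' κ') eN := (comp_assoc' _ _ _).symm
        _ = comp (triv N' Q') eN := by rw [hse.1.1]
        _ = triv N Q' := triv_comp' _
      have h2 : comp eQ (triv N Q) = triv N Q' := comp_triv' _
      exact cancel_left' hjQ1 (h1.trans h2.symm)
    · -- universal property
      intro X u hu
      have hu' : comp α' (comp eT u) = triv X Q' := by
        calc comp α' (comp eT u) = comp (comp α' eT) u := (comp_assoc' _ _ _).symm
        _ = comp (comp eQ α) u := by rw [sq2]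
        _ = comp eQ (comp α u) := comp_assoc' _ _ _
        _ = comp eQ (triv X Q) := by rw [hu]
        _ = triv X Q' := comp_triv' _
      obtain ⟨v', hv', huniq⟩ := hse.1.2 X (comp eT u) hu'
      refine ⟨comp jN v', ?_, ?_⟩
      · apply cancel_left' hjT1
        calc comp eT (comp κ (comp jN v')) = comp (comp eT κ) (comp jN v') :=
              (comp_assoc' _ _ _).symm
        _ = comp (comp κ' eN) (comp jN v') := by rw [sq1]
        _ = comp κ' (comp eN (comp jN v')) := comp_assoc' _ _ _
        _ = comp κ' (comp (comp eN jN) v') := by rw [comp_assoc']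
        _ = comp κ' (comp (XModHom.id N') v') := by rw [hjN2]
        _ = comp κ' v' := by rw [id_comp']
        _ = comp eT u := hv'
      · intro w hw
        have hw' : comp κ' (comp eN w) = comp eT u := by
          calc comp κ' (comp eN w) = comp (comp κ' eN) w := (comp_assoc' _ _ _).symm
          _ = comp (comp eT κ) w := by rw [sq1]
          _ = comp eT (comp κ w) := comp_assoc' _ _ _
          _ = comp eT u := by rw [hw]
        have := huniq (comp eN w) hw'
        calc w = comp (XModHom.id N) w := (id_comp' _).symm
        _ = comp (comp jN eN) w := by rw [hjN1]
        _ = comp jN (comp eN w) := comp_assoc' _ _ _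
        _ = comp jN v' := by rw [this]
  · -- regular epi
    constructor
    · intro q
      obtain ⟨t', ht'⟩ := hse.2.1 (eQ.f1 q)
      refine ⟨jT.f1 t', ?_⟩
      apply iso_inj1 ⟨jQ, hjQ1, hjQ2⟩
      calc eQ.f1 (α.f1 (jT.f1 t')) = α'.f1 (eT.f1 (jT.f1 t')) := (congr_f1 sq2 _).symm
      _ = α'.f1 t' := congrArg α'.f1 (congr_f1 hjT2 t')
      _ = eQ.f1 q := ht'
    · intro q
      obtain ⟨t', ht'⟩ := hse.2.2 (eQ.f2 q)
      refine ⟨jT.f2 t', ?_⟩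
      apply iso_inj2 ⟨jQ, hjQ1, hjQ2⟩
      calc eQ.f2 (α.f2 (jT.f2 t')) = α'.f2 (eT.f2 (jT.f2 t')) := (congr_f2 sq2 _).symm
      _ = α'.f2 t' := congrArg α'.f2 (congr_f2 hjT2 t')
      _ = eQ.f2 q := ht'

/-- The inverse of a local coaugmentation intertwines a morphism with its localization. -/
theorem natural_inv_square (L : LocalizationFunctor) {A B : XMod} (f : XModHom A B)
    {jA : XModHom (L.obj A) A} {jB : XModHom (L.obj B) B}
    (hjA2 : comp (L.ell A) jA = XModHom.id (L.obj A))
    (hjB1 : comp jB (L.ell B) = XModHom.id B) :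
    comp f jA = comp jB (L.map f) := by
  calc comp f jA = comp (XModHom.id B) (comp f jA) := (id_comp' _).symm
  _ = comp (comp jB (L.ell B)) (comp f jA) := by rw [hjB1]
  _ = comp jB (comp (L.ell B) (comp f jA)) := comp_assoc' _ _ _
  _ = comp jB (comp (comp (L.ell B) f) jA) :=
        congrArg (fun z => comp jB z) (comp_assoc' _ _ _).symm
  _ = comp jB (comp (comp (L.map f) (L.ell A)) jA) := by rw [L.natural f]
  _ = comp jB (comp (L.map f) (comp (L.ell A) jA)) :=
        congrArg (fun z => comp jB z) (comp_assoc' _ _ _)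
  _ = comp jB (comp (L.map f) (XModHom.id (L.obj A))) := by rw [hjA2]
  _ = comp jB (L.map f) := by rw [comp_id']

/-- A short exact sequence of local objects is `L`-flat. -/
theorem flat_of_local (L : LocalizationFunctor) {N T Q : XMod}
    {κ : XModHom N T} {α : XModHom T Q} (hse : ShortExact κ α)
    (hN : L.IsLocal N) (hT : L.IsLocal T) (hQ : L.IsLocal Q) : L.LFlat κ α := by
  obtain ⟨jN, hjN1, hjN2⟩ := hN
  obtain ⟨jT, hjT1, hjT2⟩ := hT
  obtain ⟨jQ, hjQ1, hjQ2⟩ := hQ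
  exact ses_transfer (κ' := κ) (α' := α)
    ⟨L.ell N, hjN2, hjN1⟩ ⟨L.ell T, hjT2, hjT1⟩ ⟨L.ell Q, hjQ2, hjQ1⟩
    (natural_inv_square L κ hjN2 hjT1) (natural_inv_square L α hjT2 hjQ1) hse

/-- Maps out of `L A` into a local object are determined by restriction along `ℓ_A`. -/
theorem ell_cancel (L : LocalizationFunctor) {A X : XMod} (hX : L.IsLocal X)
    {u v : XModHom (L.obj A) X}
    (h : comp u (L.ell A) = comp v (L.ell A)) : u = v := by
  obtain ⟨jX, hjX1, _⟩ := hX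
  obtain ⟨m, _, hm2⟩ := L.iso_map_ell A
  have h2 : comp (L.map u) (L.map (L.ell A)) = comp (L.map v) (L.map (L.ell A)) := by
    rw [← L.map_comp, ← L.map_comp, h]
  have h3 : L.map u = L.map v := by
    calc L.map u = comp (L.map u) (XModHom.id _) := (comp_id' _).symm
    _ = comp (L.map u) (comp (L.map (L.ell A)) m) := by rw [hm2]
    _ = comp (comp (L.map u) (L.map (L.ell A))) m := (comp_assoc' _ _ _).symm
    _ = comp (comp (L.map v) (L.map (L.ell A))) m := by rw [h2]
    _ = comp (L.map v) (comp (L.map (L.ell A)) m) := comp_assoc' _ _ _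
    _ = comp (L.map v) (XModHom.id _) := by rw [hm2]
    _ = L.map v := comp_id' _
  have h4 : comp (L.ell X) u = comp (L.ell X) v := by
    rw [L.natural u, L.natural v, h3]
  exact cancel_left' hjX1 h4

/-- Any morphism to a local object factors through the coaugmentation. -/
theorem factor_local (L : LocalizationFunctor) {A X : XMod} (hX : L.IsLocal X)
    (φ : XModHom A X) : ∃ φb : XModHom (L.obj A) X, comp φb (L.ell A) = φ := by
  obtain ⟨jX, hjX1, _⟩ := hX
  refine ⟨comp jX (L.map φ), ?_⟩
  calc comp (comp jX (L.map φ)) (L.ell A) = comp jX (comp (L.map φ) (L.ell A)) :=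
        comp_assoc' _ _ _
  _ = comp jX (comp (L.ell X) φ) := by rw [L.natural φ]
  _ = comp (comp jX (L.ell X)) φ := (comp_assoc' _ _ _).symm
  _ = comp (XModHom.id X) φ := by rw [hjX1]
  _ = φ := id_comp' _

/-- If a morphism is orthogonal to all local objects then its localization is
an isomorphism. -/
theorem iso_map_of_orth (L : LocalizationFunctor) {A B : XMod} (f : XModHom A B)
    (hinj : ∀ X, L.IsLocal X → ∀ u v : XModHom B X, comp u f = comp v f → u = v)
    (hsurj : ∀ X, L.IsLocal X → ∀ φ : XModHom A X, ∃ φ', comp φ' f = φ) :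
    IsIso (L.map f) := by
  obtain ⟨ψ, hψ⟩ := hsurj (L.obj A) (L.iso_ell_obj A) (L.ell A)
  obtain ⟨k, hk⟩ := factor_local L (L.iso_ell_obj A) ψ
  refine ⟨k, ?_, ?_⟩
  · apply ell_cancel L (L.iso_ell_obj A)
    calc comp (comp k (L.map f)) (L.ell A) = comp k (comp (L.map f) (L.ell A)) :=
          comp_assoc' _ _ _
    _ = comp k (comp (L.ell B) f) := by rw [← L.natural f]
    _ = comp (comp k (L.ell B)) f := (comp_assoc' _ _ _).symm
    _ = comp ψ f := by rw [hk]
    _ = L.ell A := hψ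
    _ = comp (XModHom.id _) (L.ell A) := (id_comp' _).symm
  · have hfψ : comp (L.map f) ψ = L.ell B := by
      apply hinj (L.obj B) (L.iso_ell_obj B)
      calc comp (comp (L.map f) ψ) f = comp (L.map f) (comp ψ f) := comp_assoc' _ _ _
      _ = comp (L.map f) (L.ell A) := by rw [hψ]
      _ = comp (L.ell B) f := (L.natural f).symm
    apply ell_cancel L (L.iso_ell_obj B)
    calc comp (comp (L.map f) k) (L.ell B) = comp (L.map f) (comp k (L.ell B)) :=
          comp_assoc' _ _ _
    _ = comp (L.map f) ψ := by rw [hk]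
    _ = L.ell B := hfψ
    _ = comp (XModHom.id _) (L.ell B) := (id_comp' _).symm

/-- Lifting a morphism along a componentwise surjection containing its kernel. -/
theorem lift_of_regEpi {A B X : XMod} (f : XModHom A B) (hf : RegEpi f)
    (φ : XModHom A X) (h1 : f.f1.ker ≤ φ.f1.ker) (h2 : f.f2.ker ≤ φ.f2.ker) :
    ∃ φ' : XModHom B X, comp φ' f = φ := by
  have hi1 : Function.RightInverse (Function.surjInv hf.1) f.f1 :=
    Function.rightInverse_surjInv hf.1
  have hi2 : Function.RightInverse (Function.surjInv hf.2) f.f2 :=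
    Function.rightInverse_surjInv hf.2
  set p1 : B.M →* X.M := f.f1.liftOfRightInverse _ hi1 ⟨φ.f1, h1⟩ with hp1def
  set p2 : B.G →* X.G := f.f2.liftOfRightInverse _ hi2 ⟨φ.f2, h2⟩ with hp2def
  have hp1 : ∀ a, p1 (f.f1 a) = φ.f1 a := fun a =>
    f.f1.liftOfRightInverse_comp_apply _ hi1 ⟨φ.f1, h1⟩ a
  have hp2 : ∀ a, p2 (f.f2 a) = φ.f2 a := fun a =>
    f.f2.liftOfRightInverse_comp_apply _ hi2 ⟨φ.f2, h2⟩ a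
  refine ⟨⟨p1, p2, ?_, ?_⟩, ?_⟩
  · intro y
    obtain ⟨x, rfl⟩ := hf.1 y
    calc X.d (p1 (f.f1 x)) = X.d (φ.f1 x) := by rw [hp1]
    _ = φ.f2 (A.d x) := φ.comm_d x
    _ = p2 (f.f2 (A.d x)) := (hp2 _).symm
    _ = p2 (B.d (f.f1 x)) := by rw [f.comm_d]
  · intro b y
    obtain ⟨a, rfl⟩ := hf.2 b
    obtain ⟨x, rfl⟩ := hf.1 y
    calc p1 (B.act (f.f2 a) (f.f1 x)) = p1 (f.f1 (A.act a x)) := by rw [f.equiv]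
    _ = φ.f1 (A.act a x) := hp1 _
    _ = X.act (φ.f2 a) (φ.f1 x) := φ.equiv a x
    _ = X.act (p2 (f.f2 a)) (p1 (f.f1 x)) := by rw [hp1, hp2]
  · exact hom_ext' (fun x => hp1 x) (fun x => hp2 x)

section CmpMap

variable (L : LocalizationFunctor) {N T Q Q' : XMod}
  (κ : XModHom N T) (α : XModHom T Q) (g : XModHom Q' Q)

/-- The comparison morphism `T ×_Q Q' → LT ×_{LQ} Q'`. -/
def cmpMap : XModHom (pbXMod α g) (pbXMod (L.map α) (XModHom.comp (L.ell Q) g)) where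
  f1 :=
    { toFun := fun w => ⟨((L.ell T).f1 w.1.1, w.1.2), by
        show (L.map α).f1 ((L.ell T).f1 w.1.1) = (L.ell Q).f1 (g.f1 w.1.2)
        have hnat : (L.ell Q).f1 (α.f1 w.1.1) = (L.map α).f1 ((L.ell T).f1 w.1.1) :=
          congr_f1 (L.natural α) w.1.1
        have hw : α.f1 w.1.1 = g.f1 w.1.2 := w.2
        rw [← hnat, hw]⟩
      map_one' := Subtype.ext (Prod.ext (map_one _) rfl)
      map_mul' := fun a b => Subtype.ext (Prod.ext (map_mul _ _ _) rfl) }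
  f2 :=
    { toFun := fun w => ⟨((L.ell T).f2 w.1.1, w.1.2), by
        show (L.map α).f2 ((L.ell T).f2 w.1.1) = (L.ell Q).f2 (g.f2 w.1.2)
        have hnat : (L.ell Q).f2 (α.f2 w.1.1) = (L.map α).f2 ((L.ell T).f2 w.1.1) :=
          congr_f2 (L.natural α) w.1.1
        have hw : α.f2 w.1.1 = g.f2 w.1.2 := w.2
        rw [← hnat, hw]⟩
      map_one' := Subtype.ext (Prod.ext (map_one _) rfl)
      map_mul' := fun a b => Subtype.ext (Prod.ext (map_mul _ _ _) rfl) }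
  comm_d := fun w => Subtype.ext (Prod.ext ((L.ell T).comm_d w.1.1) rfl)
  equiv := fun b w => Subtype.ext (Prod.ext ((L.ell T).equiv b.1.1 w.1.1) rfl)

theorem cmpMap_snd :
    comp (pbSnd (L.map α) (XModHom.comp (L.ell Q) g)) (cmpMap L α g) = pbSnd α g :=
  hom_ext' (fun _ => rfl) (fun _ => rfl)

theorem cmpMap_in (h : comp α κ = triv N Q)
    (h' : comp (L.map α) (L.map κ) = triv (L.obj N) (L.obj Q)) :
    comp (cmpMap L α g) (pbIn κ α g h) =
      comp (pbIn (L.map κ) (L.map α) (XModHom.comp (L.ell Q) g) h') (L.ell N) := by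
  apply hom_ext'
  · intro n
    apply Subtype.ext
    exact Prod.ext (congr_f1 (L.natural κ) n) rfl
  · intro n
    apply Subtype.ext
    exact Prod.ext (congr_f2 (L.natural κ) n) rfl

variable {κ α}

theorem cmp_regEpi (hL : L.RegEpiLoc) (hse : ShortExact κ α)
    (hflat : L.LFlat κ α) : RegEpi (cmpMap L α g) := by
  constructor
  · rintro ⟨⟨x, q'⟩, hx⟩
    have hx' : (L.map α).f1 x = (L.ell Q).f1 (g.f1 q') := hx
    obtain ⟨t1, ht1⟩ := hse.2.1 (g.f1 q')
    have hker : (L.map α).f1 (x * ((L.ell T).f1 t1)⁻¹) = 1 := by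
      have hnat0 : (L.ell Q).f1 (α.f1 t1) = (L.map α).f1 ((L.ell T).f1 t1) :=
        congr_f1 (L.natural α) t1
      have hnat : (L.map α).f1 ((L.ell T).f1 t1) = (L.ell Q).f1 (g.f1 q') := by
        rw [← hnat0, ht1]
      rw [map_mul, map_inv, hnat, hx', mul_inv_cancel]
    obtain ⟨m, hm⟩ := exists_ker1 hflat.1 hker
    obtain ⟨n, hn⟩ := (hL N).1 m
    have htriv : α.f1 (κ.f1 n) = 1 := congr_f1 hse.1.1 n
    refine ⟨⟨(κ.f1 n * t1, q'), ?_⟩, ?_⟩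
    · show α.f1 (κ.f1 n * t1) = g.f1 q'
      rw [map_mul, htriv, one_mul, ht1]
    · apply Subtype.ext
      apply Prod.ext
      · show (L.ell T).f1 (κ.f1 n * t1) = x
        have hnat : (L.ell T).f1 (κ.f1 n) = (L.map κ).f1 ((L.ell N).f1 n) :=
          congr_f1 (L.natural κ) n
        rw [map_mul, hnat, hn, hm, inv_mul_cancel_right]
      · rfl
  · rintro ⟨⟨x, q'⟩, hx⟩
    have hx' : (L.map α).f2 x = (L.ell Q).f2 (g.f2 q') := hx
    obtain ⟨t1, ht1⟩ := hse.2.2 (g.f2 q')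
    have hker : (L.map α).f2 (x * ((L.ell T).f2 t1)⁻¹) = 1 := by
      have hnat0 : (L.ell Q).f2 (α.f2 t1) = (L.map α).f2 ((L.ell T).f2 t1) :=
        congr_f2 (L.natural α) t1
      have hnat : (L.map α).f2 ((L.ell T).f2 t1) = (L.ell Q).f2 (g.f2 q') := by
        rw [← hnat0, ht1]
      rw [map_mul, map_inv, hnat, hx', mul_inv_cancel]
    obtain ⟨m, hm⟩ := exists_ker2 hflat.1 hker
    obtain ⟨n, hn⟩ := (hL N).2 m
    have htriv : α.f2 (κ.f2 n) = 1 := congr_f2 hse.1.1 n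
    refine ⟨⟨(κ.f2 n * t1, q'), ?_⟩, ?_⟩
    · show α.f2 (κ.f2 n * t1) = g.f2 q'
      rw [map_mul, htriv, one_mul, ht1]
    · apply Subtype.ext
      apply Prod.ext
      · show (L.ell T).f2 (κ.f2 n * t1) = x
        have hnat : (L.ell T).f2 (κ.f2 n) = (L.map κ).f2 ((L.ell N).f2 n) :=
          congr_f2 (L.natural κ) n
        rw [map_mul, hnat, hn, hm, inv_mul_cancel_right]
      · rfl

theorem cmp_ker_le1 (hse : ShortExact κ α) (hflat : L.LFlat κ α)
    {X : XMod} (hX : L.IsLocal X) (φ : XModHom (pbXMod α g) X) :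
    (cmpMap L α g).f1.ker ≤ φ.f1.ker := by
  obtain ⟨ψb, hψb⟩ := factor_local L hX (comp φ (pbIn κ α g hse.1.1))
  intro w hw
  have hw' : ((cmpMap L α g).f1 w).1 = 1 := by
    have : (cmpMap L α g).f1 w = 1 := hw
    rw [this]; rfl
  have h1 : (L.ell T).f1 w.1.1 = 1 := congrArg Prod.fst hw'
  have h2 : w.1.2 = 1 := congrArg Prod.snd hw'
  have hker : α.f1 w.1.1 = 1 := by
    have hmem : α.f1 w.1.1 = g.f1 w.1.2 := w.2
    rw [hmem, h2, map_one]
  obtain ⟨n, hn⟩ := exists_ker1 hse.1 hker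
  have hLn : (L.map κ).f1 ((L.ell N).f1 n) = 1 := by
    have hnat0 : (L.ell T).f1 (κ.f1 n) = (L.map κ).f1 ((L.ell N).f1 n) :=
      congr_f1 (L.natural κ) n
    rw [← hnat0, hn, h1]
  have hn1 : (L.ell N).f1 n = 1 := by
    apply ker_inj1 hflat.1
    rw [hLn, map_one]
  have hwn : w = (pbIn κ α g hse.1.1).f1 n := by
    apply Subtype.ext
    exact Prod.ext hn.symm h2
  show φ.f1 w = 1
  rw [hwn]
  have : φ.f1 ((pbIn κ α g hse.1.1).f1 n) = ψb.f1 ((L.ell N).f1 n) :=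
    (congr_f1 hψb n).symm
  rw [this, hn1, map_one]

/-- Level-2 injectivity of a categorical kernel. -/
theorem ker_inj2 {T₀ Q₀ N₀ : XMod} {κ₀ : XModHom N₀ T₀} {α₀ : XModHom T₀ Q₀}
    (hk : IsKernelOf κ₀ α₀) : Function.Injective κ₀.f2 := by
  obtain ⟨v, hv, _⟩ := hk.2 (kerXMod α₀) (kerIncl α₀)
    (hom_ext' (fun x => x.2) (fun x => x.2))
  obtain ⟨_, _, huniq⟩ := hk.2 N₀ κ₀ hk.1
  set w := kerFactor κ₀ α₀ hk.1 with hw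
  have hkvw : comp κ₀ (comp v w) = κ₀ := by
    rw [← comp_assoc', hv]
    exact hom_ext' (fun _ => rfl) (fun _ => rfl)
  have hvw : comp v w = XModHom.id N₀ := by
    rw [huniq (comp v w) hkvw, ← huniq (XModHom.id N₀) (comp_id' κ₀)]
  intro a b hab
  have ha := congr_f2 hvw a
  have hb := congr_f2 hvw b
  have : w.f2 a = w.f2 b := Subtype.ext hab
  calc a = v.f2 (w.f2 a) := ha.symm
  _ = v.f2 (w.f2 b) := by rw [this]
  _ = b := hb

theorem cmp_ker_le2 (hse : ShortExact κ α) (hflat : L.LFlat κ α)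
    {X : XMod} (hX : L.IsLocal X) (φ : XModHom (pbXMod α g) X) :
    (cmpMap L α g).f2.ker ≤ φ.f2.ker := by
  obtain ⟨ψb, hψb⟩ := factor_local L hX (comp φ (pbIn κ α g hse.1.1))
  intro w hw
  have hw' : ((cmpMap L α g).f2 w).1 = 1 := by
    have : (cmpMap L α g).f2 w = 1 := hw
    rw [this]; rfl
  have h1 : (L.ell T).f2 w.1.1 = 1 := congrArg Prod.fst hw'
  have h2 : w.1.2 = 1 := congrArg Prod.snd hw'
  have hker : α.f2 w.1.1 = 1 := by
    have hmem : α.f2 w.1.1 = g.f2 w.1.2 := w.2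
    rw [hmem, h2, map_one]
  obtain ⟨n, hn⟩ := exists_ker2 hse.1 hker
  have hLn : (L.map κ).f2 ((L.ell N).f2 n) = 1 := by
    have hnat0 : (L.ell T).f2 (κ.f2 n) = (L.map κ).f2 ((L.ell N).f2 n) :=
      congr_f2 (L.natural κ) n
    rw [← hnat0, hn, h1]
  have hn1 : (L.ell N).f2 n = 1 := by
    apply ker_inj2 hflat.1
    rw [hLn, map_one]
  have hwn : w = (pbIn κ α g hse.1.1).f2 n := by
    apply Subtype.ext
    exact Prod.ext hn.symm h2
  show φ.f2 w = 1
  rw [hwn]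
  have : φ.f2 ((pbIn κ α g hse.1.1).f2 n) = ψb.f2 ((L.ell N).f2 n) :=
    (congr_f2 hψb n).symm
  rw [this, hn1, map_one]

theorem cmp_iso_map (hL : L.RegEpiLoc) (hse : ShortExact κ α)
    (hflat : L.LFlat κ α) : IsIso (L.map (cmpMap L α g)) := by
  apply iso_map_of_orth
  · intro X hX u v huv
    have hsurj := cmp_regEpi L g hL hse hflat
    apply hom_ext'
    · intro y
      obtain ⟨x, rfl⟩ := hsurj.1 y
      exact congr_f1 huv x
    · intro y
      obtain ⟨x, rfl⟩ := hsurj.2 y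
      exact congr_f2 huv x
  · intro X hX φ
    exact lift_of_regEpi (cmpMap L α g) (cmp_regEpi L g hL hse hflat) φ
      (cmp_ker_le1 L g hse hflat hX φ) (cmp_ker_le2 L g hse hflat hX φ)

end CmpMap

end CFProofAux

/-- A regular-epi localization functor `L` is conditionally
flat if and only if for every short exact sequence of `L`-local crossed
modules, the pullback sequence along any morphism `Q' → Q` is `L`-flat. -/
theorem conditionallyFlat_iff_local_sequences (L : LocalizationFunctor)
    (hL : L.RegEpiLoc) :
    L.ConditionallyFlat ↔
      ∀ (N T Q : XMod) (κ : XModHom N T) (α : XModHom T Q)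
        (hse : ShortExact κ α), L.IsLocal N → L.IsLocal T → L.IsLocal Q →
          ∀ (Q' : XMod) (g : XModHom Q' Q),
            L.LFlat (pbIn κ α g hse.1.1) (pbSnd α g) := by
  constructor
  · -- conditionally flat implies flatness of pullbacks of local sequences
    intro hcf N T Q κ α hse hN hT hQ Q' g
    exact hcf N T Q κ α hse (flat_of_local L hse hN hT hQ) Q' g
  · -- converse
    intro H N T Q κ α hse hflat Q' g
    have Hap := H (L.obj N) (L.obj T) (L.obj Q) (L.map κ) (L.map α) hflat
      (L.iso_ell_obj N) (L.iso_ell_obj T) (L.iso_ell_obj Q) Q'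
      (XModHom.comp (L.ell Q) g)
    -- transfer exactness along the comparison isomorphisms
    refine ses_transfer (L.iso_map_ell N) (cmp_iso_map L g hL hse hflat)
      ⟨XModHom.id _, id_comp' _, id_comp' _⟩ ?_ ?_ Hap
    · exact ((L.map_comp (L.ell N)
        (pbIn (L.map κ) (L.map α) (XModHom.comp (L.ell Q) g) hflat.1.1)).symm.trans
          (congrArg L.map (cmpMap_in L κ α g hse.1.1 hflat.1.1).symm)).trans
            (L.map_comp (pbIn κ α g hse.1.1) (cmpMap L α g))
    · rw [← L.map_comp, cmpMap_snd L α g, id_comp']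
end

section
/- Let L be a localization functor on XMod that is right exact, i.e. for every short exact sequence 1 → N →(κ) T →(α) Q → 1 of crossed modules, the sequence LN →(Lκ) LT →(Lα) LQ → 1 is exact (Lα is a regular epimorphism and the image of Lκ is a kernel of Lα). Then L is admissible for the class of regular epimorphisms. -/
set_option linter.unusedVariables false

section Aux

namespace XModHom

theorem comp_assoc' {A B C D : XMod} (h : XModHom C D) (g : XModHom B C) (f : XModHom A B) :
    comp (comp h g) f = comp h (comp g f) := ext rfl rfl

theorem comp_id' {A B : XMod} (f : XModHom A B) : comp f (id A) = f :=
  ext (MonoidHom.comp_id _) (MonoidHom.comp_id _)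

theorem id_comp' {A B : XMod} (f : XModHom A B) : comp (id B) f = f :=
  ext (MonoidHom.id_comp _) (MonoidHom.id_comp _)

theorem congr_f1 {A B : XMod} {f g : XModHom A B} (h : f = g) (x : A.M) :
    f.f1 x = g.f1 x := by rw [h]

theorem congr_f2 {A B : XMod} {f g : XModHom A B} (h : f = g) (x : A.G) :
    f.f2 x = g.f2 x := by rw [h]

theorem comp_triv' {A B C : XMod} (f : XModHom B C) :
    comp f (triv A B) = triv A C :=
  ext (MonoidHom.ext fun _ => by show f.f1 1 = 1; exact map_one _)
    (MonoidHom.ext fun _ => by show f.f2 1 = 1; exact map_one _)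

theorem triv_comp' {A B C : XMod} (f : XModHom A B) :
    comp (triv B C) f = triv A C :=
  ext (MonoidHom.ext fun _ => rfl) (MonoidHom.ext fun _ => rfl)

theorem IsIso.bijective {A B : XMod} {f : XModHom A B} (h : IsIso f) :
    Function.Bijective f.f1 ∧ Function.Bijective f.f2 := by
  obtain ⟨g, hg1, hg2⟩ := h
  refine ⟨Function.bijective_iff_has_inverse.mpr ⟨g.f1, fun x => ?_, fun x => ?_⟩,
    Function.bijective_iff_has_inverse.mpr ⟨g.f2, fun x => ?_, fun x => ?_⟩⟩
  · exact congr_f1 hg1 x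
  · exact congr_f1 hg2 x
  · exact congr_f2 hg1 x
  · exact congr_f2 hg2 x

theorem isIso_of_bijective {A B : XMod} (f : XModHom A B)
    (h1 : Function.Bijective f.f1) (h2 : Function.Bijective f.f2) : IsIso f := by
  let e1 := MulEquiv.ofBijective f.f1 h1
  let e2 := MulEquiv.ofBijective f.f2 h2
  have hfe1 : ∀ x, f.f1 (e1.symm x) = x := fun x => e1.apply_symm_apply x
  have hfe2 : ∀ x, f.f2 (e2.symm x) = x := fun x => e2.apply_symm_apply x
  refine ⟨⟨e1.symm.toMonoidHom, e2.symm.toMonoidHom, ?_, ?_⟩, ?_, ?_⟩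
  · intro m
    apply h2.1
    show f.f2 (A.d (e1.symm m)) = f.f2 (e2.symm (B.d m))
    rw [← f.comm_d, hfe1, hfe2]
  · intro b m
    apply h1.1
    show f.f1 (e1.symm (B.act b m)) = f.f1 (A.act (e2.symm b) (e1.symm m))
    rw [hfe1, f.equiv, hfe1, hfe2]
  · exact ext (MonoidHom.ext fun x => e1.symm_apply_apply x)
      (MonoidHom.ext fun x => e2.symm_apply_apply x)
  · exact ext (MonoidHom.ext fun x => hfe1 x) (MonoidHom.ext fun x => hfe2 x)

end XModHom

end Aux
section Aux2

/-- The trivial crossed module. -/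
def unitX : XMod where
  M := PUnit
  G := PUnit
  act := 1
  d := 1
  act_d := fun _ _ => Subsingleton.elim _ _
  peiffer := fun _ _ => Subsingleton.elim _ _

instance : Subsingleton unitX.M := inferInstanceAs (Subsingleton PUnit)
instance : Subsingleton unitX.G := inferInstanceAs (Subsingleton PUnit)

theorem toUnit_eq {A : XMod} (f g : XModHom A unitX) : f = g :=
  XModHom.ext (MonoidHom.ext fun _ => Subsingleton.elim _ _)
    (MonoidHom.ext fun _ => Subsingleton.elim _ _)

theorem unit_shortExact : ShortExact (XModHom.id unitX) (XModHom.id unitX) := by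
  refine ⟨⟨toUnit_eq _ _, ?_⟩, fun x => ⟨x, rfl⟩, fun x => ⟨x, rfl⟩⟩
  intro X u _
  exact ⟨u, XModHom.id_comp' u, fun v _ => toUnit_eq v u⟩

theorem triv_factor (A B : XMod) :
    XModHom.triv A B = XModHom.comp (XModHom.triv unitX B) (XModHom.triv A unitX) :=
  XModHom.ext (MonoidHom.ext fun _ => rfl) (MonoidHom.ext fun _ => rfl)

theorem kerIncl_isKernel {N T : XMod} (f : XModHom N T) :
    XModHom.IsKernelOf (kerIncl f) f := by
  constructor
  · exact XModHom.ext (MonoidHom.ext fun n => n.2) (MonoidHom.ext fun n => n.2)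
  · intro X u hu
    have hu1 : ∀ x, f.f1 (u.f1 x) ∈ ({1} : Set T.M) := fun x => XModHom.congr_f1 hu x
    have hu2 : ∀ x, f.f2 (u.f2 x) ∈ ({1} : Set T.G) := fun x => XModHom.congr_f2 hu x
    refine ⟨⟨u.f1.codRestrict f.f1.ker hu1, u.f2.codRestrict f.f2.ker hu2,
      fun n => Subtype.ext (u.comm_d n), fun b n => Subtype.ext (u.equiv b n)⟩,
      XModHom.ext (MonoidHom.ext fun x => rfl) (MonoidHom.ext fun x => rfl), ?_⟩
    intro v hv
    refine XModHom.ext (MonoidHom.ext fun x => Subtype.ext ?_)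
      (MonoidHom.ext fun x => Subtype.ext ?_)
    · exact XModHom.congr_f1 hv x
    · exact XModHom.congr_f2 hv x

theorem kerIncl_mono {N T X : XMod} (f : XModHom N T) {a b : XModHom X (kerXMod f)}
    (h : XModHom.comp (kerIncl f) a = XModHom.comp (kerIncl f) b) : a = b := by
  refine XModHom.ext (MonoidHom.ext fun x => Subtype.ext ?_)
    (MonoidHom.ext fun x => Subtype.ext ?_)
  · exact XModHom.congr_f1 h x
  · exact XModHom.congr_f2 h x

theorem pb_square {T Q Q' : XMod} (α : XModHom T Q) (g : XModHom Q' Q) :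
    XModHom.comp α (pbFst α g) = XModHom.comp g (pbSnd α g) :=
  XModHom.ext (MonoidHom.ext fun x => x.2) (MonoidHom.ext fun x => x.2)

theorem pbSnd_regEpi {T Q Q' : XMod} (α : XModHom T Q) (g : XModHom Q' Q)
    (hα : XModHom.RegEpi α) : XModHom.RegEpi (pbSnd α g) := by
  constructor
  · intro m
    obtain ⟨t, ht⟩ := hα.1 (g.f1 m)
    exact ⟨⟨(t, m), ht⟩, rfl⟩
  · intro b
    obtain ⟨t, ht⟩ := hα.2 (g.f2 b)
    exact ⟨⟨(t, b), ht⟩, rfl⟩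

end Aux2
section Aux3

variable {T Q Q' : XMod} (α : XModHom T Q) (g : XModHom Q' Q)

/-- The canonical morphism from the kernel of the second pullback projection
to the kernel of `α`. -/
def pbKerToKer : XModHom (kerXMod (pbSnd α g)) (kerXMod α) where
  f1 :=
    { toFun := fun x => ⟨x.1.1.1, by
        have h1 : α.f1 x.1.1.1 = g.f1 x.1.1.2 := x.1.2
        have h2 : x.1.1.2 = 1 := x.2
        show α.f1 x.1.1.1 = 1
        rw [h1, h2, map_one]⟩
      map_one' := Subtype.ext rfl
      map_mul' := fun a b => Subtype.ext rfl }
  f2 :=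
    { toFun := fun x => ⟨x.1.1.1, by
        have h1 : α.f2 x.1.1.1 = g.f2 x.1.1.2 := x.1.2
        have h2 : x.1.1.2 = 1 := x.2
        show α.f2 x.1.1.1 = 1
        rw [h1, h2, map_one]⟩
      map_one' := Subtype.ext rfl
      map_mul' := fun a b => Subtype.ext rfl }
  comm_d := fun x => Subtype.ext rfl
  equiv := fun b x => Subtype.ext rfl

/-- The canonical morphism from the kernel of `α` to the kernel of the second
pullback projection. -/
def kerToPbKer : XModHom (kerXMod α) (kerXMod (pbSnd α g)) where
  f1 :=
    { toFun := fun t => ⟨⟨(t.1, 1), by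
        have ht : α.f1 t.1 = 1 := t.2
        show α.f1 t.1 = g.f1 1
        rw [ht, map_one]⟩, rfl⟩
      map_one' := Subtype.ext (Subtype.ext rfl)
      map_mul' := fun a b => Subtype.ext (Subtype.ext (Prod.ext rfl (one_mul 1).symm)) }
  f2 :=
    { toFun := fun t => ⟨⟨(t.1, 1), by
        have ht : α.f2 t.1 = 1 := t.2
        show α.f2 t.1 = g.f2 1
        rw [ht, map_one]⟩, rfl⟩
      map_one' := Subtype.ext (Subtype.ext rfl)
      map_mul' := fun a b => Subtype.ext (Subtype.ext (Prod.ext rfl (one_mul 1).symm)) }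
  comm_d := fun t => Subtype.ext (Subtype.ext (Prod.ext rfl (map_one Q'.d)))
  equiv := fun b t => Subtype.ext (Subtype.ext (Prod.ext rfl (by
    show (1 : Q'.M) = Q'.act 1 1
    simp)))

theorem pbKerToKer_isIso : XModHom.IsIso (pbKerToKer α g) := by
  refine ⟨kerToPbKer α g, ?_, ?_⟩
  · refine XModHom.ext (MonoidHom.ext fun x => Subtype.ext (Subtype.ext (Prod.ext rfl ?_)))
      (MonoidHom.ext fun x => Subtype.ext (Subtype.ext (Prod.ext rfl ?_)))
    · have h2 : x.1.1.2 = 1 := x.2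
      exact h2.symm
    · have h2 : x.1.1.2 = 1 := x.2
      exact h2.symm
  · exact XModHom.ext (MonoidHom.ext fun t => Subtype.ext rfl)
      (MonoidHom.ext fun t => Subtype.ext rfl)

theorem pb_ker_square :
    XModHom.comp (pbFst α g) (kerIncl (pbSnd α g)) =
      XModHom.comp (kerIncl α) (pbKerToKer α g) :=
  XModHom.ext (MonoidHom.ext fun x => rfl) (MonoidHom.ext fun x => rfl)

end Aux3

section Aux4

theorem map_isIso (L : LocalizationFunctor) {A B : XMod} {f : XModHom A B}
    (h : XModHom.IsIso f) : XModHom.IsIso (L.map f) := by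
  obtain ⟨g, hg1, hg2⟩ := h
  refine ⟨L.map g, ?_, ?_⟩
  · rw [← L.map_comp, hg1, L.map_id]
  · rw [← L.map_comp, hg2, L.map_id]

theorem local_cancel (L : LocalizationFunctor) {A B Y : XMod} (h : XModHom A B)
    (hh : XModHom.IsIso (L.map h)) (hY : XModHom.IsIso (L.ell Y))
    {g g' : XModHom B Y} (hgg : XModHom.comp g h = XModHom.comp g' h) : g = g' := by
  obtain ⟨k, _, hk2⟩ := hh
  obtain ⟨e, he1, _⟩ := hY
  have hL : L.map g = L.map g' := by
    have h1 : XModHom.comp (L.map g) (L.map h) = XModHom.comp (L.map g') (L.map h) := by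
      rw [← L.map_comp, ← L.map_comp, hgg]
    calc L.map g = XModHom.comp (XModHom.comp (L.map g) (L.map h)) k := by
          rw [XModHom.comp_assoc', hk2, XModHom.comp_id']
    _ = XModHom.comp (XModHom.comp (L.map g') (L.map h)) k := by rw [h1]
    _ = L.map g' := by rw [XModHom.comp_assoc', hk2, XModHom.comp_id']
  calc g = XModHom.comp e (XModHom.comp (L.map g) (L.ell B)) := by
        rw [← L.natural g, ← XModHom.comp_assoc', he1, XModHom.id_comp']
  _ = XModHom.comp e (XModHom.comp (L.map g') (L.ell B)) := by rw [hL]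
  _ = g' := by rw [← L.natural g', ← XModHom.comp_assoc', he1, XModHom.id_comp']

end Aux4

/-- A localization functor on `XMod` that is right exact (it
sends every short exact sequence `1 → N →(κ) T →(α) Q → 1` to an exact sequence
`LN →(Lκ) LT →(Lα) LQ → 1`, i.e. `Lα` is a regular epimorphism and the image of
`Lκ` is a kernel of `Lα`, componentwise) is admissible for the class of regular
epimorphisms. -/
theorem right_exact_admissible (L : LocalizationFunctor)
    (hre : ∀ (N T Q : XMod) (κ : XModHom N T) (α : XModHom T Q),
      ShortExact κ α →
        XModHom.RegEpi (L.map α) ∧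
        (L.map κ).f1.range = (L.map α).f1.ker ∧
        (L.map κ).f2.range = (L.map α).f2.ker) :
    L.Admissible := by
  -- `L` of the trivial crossed module is trivial
  have hUM : ∀ m : (L.obj unitX).M, m = 1 := by
    intro m
    obtain ⟨-, hr1, -⟩ := hre _ _ _ _ _ unit_shortExact
    rw [L.map_id] at hr1
    have hm : m ∈ (XModHom.id (L.obj unitX)).f1.range := ⟨m, rfl⟩
    rw [hr1] at hm
    exact hm
  have hUG : ∀ b : (L.obj unitX).G, b = 1 := by
    intro b
    obtain ⟨-, -, hr2⟩ := hre _ _ _ _ _ unit_shortExact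
    rw [L.map_id] at hr2
    have hb : b ∈ (XModHom.id (L.obj unitX)).f2.range := ⟨b, rfl⟩
    rw [hr2] at hb
    exact hb
  -- `L` sends trivial morphisms to trivial morphisms
  have hLtriv : ∀ (A B : XMod),
      L.map (XModHom.triv A B) = XModHom.triv (L.obj A) (L.obj B) := by
    intro A B
    rw [triv_factor A B, L.map_comp]
    refine XModHom.ext (MonoidHom.ext fun x => ?_) (MonoidHom.ext fun x => ?_)
    · show (L.map (XModHom.triv unitX B)).f1 ((L.map (XModHom.triv A unitX)).f1 x) = 1
      rw [hUM ((L.map (XModHom.triv A unitX)).f1 x), map_one]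
    · show (L.map (XModHom.triv unitX B)).f2 ((L.map (XModHom.triv A unitX)).f2 x) = 1
      rw [hUG ((L.map (XModHom.triv A unitX)).f2 x), map_one]
  intro T Q α hα
  -- the two short exact sequences
  have hses2 : ShortExact (kerIncl α) α := ⟨kerIncl_isKernel α, hα⟩
  have hses1 : ShortExact (kerIncl (pbSnd α (L.ell Q))) (pbSnd α (L.ell Q)) :=
    ⟨kerIncl_isKernel _, pbSnd_regEpi α (L.ell Q) hα⟩
  obtain ⟨hLπ2, hk1M, hk1G⟩ := hre _ _ _ _ _ hses1
  obtain ⟨hLα, hk2M, hk2G⟩ := hre _ _ _ _ _ hses2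
  -- the kernel of `α` is `L`-local
  obtain ⟨eT, heT1, heT2⟩ := L.iso_ell_obj T
  obtain ⟨eQ, heQ1, heQ2⟩ := L.iso_ell_obj Q
  have heQinj1 : Function.Injective (L.ell (L.obj Q)).f1 :=
    Function.LeftInverse.injective (g := eQ.f1) fun x => XModHom.congr_f1 heQ1 x
  have heQinj2 : Function.Injective (L.ell (L.obj Q)).f2 :=
    Function.LeftInverse.injective (g := eQ.f2) fun x => XModHom.congr_f2 heQ1 x
  have hnatα1 : ∀ y, (L.ell (L.obj Q)).f1 (α.f1 y) = (L.map α).f1 ((L.ell (L.obj T)).f1 y) :=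
    fun y => XModHom.congr_f1 (L.natural α) y
  have hnatα2 : ∀ y, (L.ell (L.obj Q)).f2 (α.f2 y) = (L.map α).f2 ((L.ell (L.obj T)).f2 y) :=
    fun y => XModHom.congr_f2 (L.natural α) y
  have hcompκ : XModHom.comp (L.map α) (L.map (kerIncl α)) =
      XModHom.triv (L.obj (kerXMod α)) (L.obj (L.obj Q)) := by
    rw [← L.map_comp, (kerIncl_isKernel α).1, hLtriv]
  have heT1p1 : ∀ y, eT.f1 ((L.ell (L.obj T)).f1 y) = y := fun y => XModHom.congr_f1 heT1 y
  have heT1p2 : ∀ y, eT.f2 ((L.ell (L.obj T)).f2 y) = y := fun y => XModHom.congr_f2 heT1 y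
  have heT2p1 : ∀ y, (L.ell (L.obj T)).f1 (eT.f1 y) = y := fun y => XModHom.congr_f1 heT2 y
  have heT2p2 : ∀ y, (L.ell (L.obj T)).f2 (eT.f2 y) = y := fun y => XModHom.congr_f2 heT2 y
  have hu : XModHom.comp α (XModHom.comp eT (L.map (kerIncl α))) =
      XModHom.triv (L.obj (kerXMod α)) (L.obj Q) := by
    refine XModHom.ext (MonoidHom.ext fun x => ?_) (MonoidHom.ext fun x => ?_)
    · apply heQinj1
      show (L.ell (L.obj Q)).f1 (α.f1 (eT.f1 ((L.map (kerIncl α)).f1 x))) =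
        (L.ell (L.obj Q)).f1 1
      rw [hnatα1, heT2p1, map_one]
      exact XModHom.congr_f1 hcompκ x
    · apply heQinj2
      show (L.ell (L.obj Q)).f2 (α.f2 (eT.f2 ((L.map (kerIncl α)).f2 x))) =
        (L.ell (L.obj Q)).f2 1
      rw [hnatα2, heT2p2, map_one]
      exact XModHom.congr_f2 hcompκ x
  obtain ⟨r, hr, -⟩ := (kerIncl_isKernel α).2 _ (XModHom.comp eT (L.map (kerIncl α))) hu
  have hnatκ1 : ∀ n, (L.ell (L.obj T)).f1 ((kerIncl α).f1 n) =
      (L.map (kerIncl α)).f1 ((L.ell (kerXMod α)).f1 n) :=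
    fun n => XModHom.congr_f1 (L.natural (kerIncl α)) n
  have hnatκ2 : ∀ n, (L.ell (L.obj T)).f2 ((kerIncl α).f2 n) =
      (L.map (kerIncl α)).f2 ((L.ell (kerXMod α)).f2 n) :=
    fun n => XModHom.congr_f2 (L.natural (kerIncl α)) n
  have h1 : XModHom.comp r (L.ell (kerXMod α)) = XModHom.id (kerXMod α) := by
    apply kerIncl_mono α
    rw [← XModHom.comp_assoc', hr, XModHom.comp_id']
    refine XModHom.ext (MonoidHom.ext fun n => ?_) (MonoidHom.ext fun n => ?_)
    · show eT.f1 ((L.map (kerIncl α)).f1 ((L.ell (kerXMod α)).f1 n)) = (kerIncl α).f1 n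
      rw [← hnatκ1, heT1p1]
    · show eT.f2 ((L.map (kerIncl α)).f2 ((L.ell (kerXMod α)).f2 n)) = (kerIncl α).f2 n
      rw [← hnatκ2, heT1p2]
  have h2 : XModHom.comp (L.ell (kerXMod α)) r = XModHom.id (L.obj (kerXMod α)) := by
    apply local_cancel L (L.ell (kerXMod α)) (L.iso_map_ell _) (L.iso_ell_obj _)
    rw [XModHom.comp_assoc', h1, XModHom.comp_id', XModHom.id_comp']
  have hNbij := XModHom.IsIso.bijective (⟨r, h1, h2⟩ : XModHom.IsIso (L.ell (kerXMod α)))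
  have hTbij := XModHom.IsIso.bijective (L.iso_ell_obj T)
  -- `L κ` is componentwise injective
  have hκinj1 : Function.Injective (L.map (kerIncl α)).f1 := by
    intro x y hxy
    obtain ⟨x', rfl⟩ := hNbij.1.2 x
    obtain ⟨y', rfl⟩ := hNbij.1.2 y
    rw [← hnatκ1 x', ← hnatκ1 y'] at hxy
    have h := hTbij.1.1 hxy
    have hxy' : x' = y' := Subtype.ext h
    rw [hxy']
  have hκinj2 : Function.Injective (L.map (kerIncl α)).f2 := by
    intro x y hxy
    obtain ⟨x', rfl⟩ := hNbij.2.2 x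
    obtain ⟨y', rfl⟩ := hNbij.2.2 y
    rw [← hnatκ2 x', ← hnatκ2 y'] at hxy
    have h := hTbij.2.1 hxy
    have hxy' : x' = y' := Subtype.ext h
    rw [hxy']
  -- auxiliary commutation facts
  have hθbij := XModHom.IsIso.bijective (map_isIso L (pbKerToKer_isIso α (L.ell Q)))
  have hLℓQbij := XModHom.IsIso.bijective (L.iso_map_ell Q)
  have hsqL : XModHom.comp (L.map α) (L.map (pbFst α (L.ell Q))) =
      XModHom.comp (L.map (L.ell Q)) (L.map (pbSnd α (L.ell Q))) := by
    rw [← L.map_comp, ← L.map_comp, pb_square]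
  have hsq1 : ∀ z, (L.map α).f1 ((L.map (pbFst α (L.ell Q))).f1 z) =
      (L.map (L.ell Q)).f1 ((L.map (pbSnd α (L.ell Q))).f1 z) :=
    fun z => XModHom.congr_f1 hsqL z
  have hsq2 : ∀ z, (L.map α).f2 ((L.map (pbFst α (L.ell Q))).f2 z) =
      (L.map (L.ell Q)).f2 ((L.map (pbSnd α (L.ell Q))).f2 z) :=
    fun z => XModHom.congr_f2 hsqL z
  have hbksqL : XModHom.comp (L.map (pbFst α (L.ell Q)))
        (L.map (kerIncl (pbSnd α (L.ell Q)))) =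
      XModHom.comp (L.map (kerIncl α)) (L.map (pbKerToKer α (L.ell Q))) := by
    rw [← L.map_comp, ← L.map_comp, pb_ker_square]
  have hbk1 : ∀ y, (L.map (pbFst α (L.ell Q))).f1 ((L.map (kerIncl (pbSnd α (L.ell Q)))).f1 y) =
      (L.map (kerIncl α)).f1 ((L.map (pbKerToKer α (L.ell Q))).f1 y) :=
    fun y => XModHom.congr_f1 hbksqL y
  have hbk2 : ∀ y, (L.map (pbFst α (L.ell Q))).f2 ((L.map (kerIncl (pbSnd α (L.ell Q)))).f2 y) =
      (L.map (kerIncl α)).f2 ((L.map (pbKerToKer α (L.ell Q))).f2 y) :=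
    fun y => XModHom.congr_f2 hbksqL y
  -- `L π₁` is componentwise bijective
  have hsurj1 : Function.Surjective (L.map (pbFst α (L.ell Q))).f1 := by
    intro z
    obtain ⟨q, hq⟩ := hLℓQbij.1.2 ((L.map α).f1 z)
    obtain ⟨p, hp⟩ := hLπ2.1 q
    have h5 : (L.map α).f1 (z * ((L.map (pbFst α (L.ell Q))).f1 p)⁻¹) = 1 := by
      rw [map_mul, map_inv, hsq1 p, hp, hq, mul_inv_cancel]
    have h6 : z * ((L.map (pbFst α (L.ell Q))).f1 p)⁻¹ ∈ (L.map (kerIncl α)).f1.range := by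
      rw [hk2M]
      exact h5
    obtain ⟨n, hn⟩ := h6
    obtain ⟨n', rfl⟩ := hθbij.1.2 n
    refine ⟨(L.map (kerIncl (pbSnd α (L.ell Q)))).f1 n' * p, ?_⟩
    rw [map_mul, hbk1 n', hn, inv_mul_cancel_right]
  have hsurj2 : Function.Surjective (L.map (pbFst α (L.ell Q))).f2 := by
    intro z
    obtain ⟨q, hq⟩ := hLℓQbij.2.2 ((L.map α).f2 z)
    obtain ⟨p, hp⟩ := hLπ2.2 q
    have h5 : (L.map α).f2 (z * ((L.map (pbFst α (L.ell Q))).f2 p)⁻¹) = 1 := by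
      rw [map_mul, map_inv, hsq2 p, hp, hq, mul_inv_cancel]
    have h6 : z * ((L.map (pbFst α (L.ell Q))).f2 p)⁻¹ ∈ (L.map (kerIncl α)).f2.range := by
      rw [hk2G]
      exact h5
    obtain ⟨n, hn⟩ := h6
    obtain ⟨n', rfl⟩ := hθbij.2.2 n
    refine ⟨(L.map (kerIncl (pbSnd α (L.ell Q)))).f2 n' * p, ?_⟩
    rw [map_mul, hbk2 n', hn, inv_mul_cancel_right]
  have hinj1 : Function.Injective (L.map (pbFst α (L.ell Q))).f1 := by
    refine (injective_iff_map_eq_one _).mpr ?_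
    intro w hw
    have h7 : (L.map (pbSnd α (L.ell Q))).f1 w = 1 := by
      apply hLℓQbij.1.1
      rw [← hsq1, hw, map_one, map_one]
    have h8 : w ∈ (L.map (kerIncl (pbSnd α (L.ell Q)))).f1.range := by
      rw [hk1M]
      exact h7
    obtain ⟨y, rfl⟩ := h8
    have h9 : (L.map (pbKerToKer α (L.ell Q))).f1 y = 1 := by
      apply hκinj1
      rw [map_one, ← hbk1 y]
      exact hw
    have h10 : y = 1 := by
      apply hθbij.1.1
      rw [h9, map_one]
    rw [h10, map_one]
  have hinj2 : Function.Injective (L.map (pbFst α (L.ell Q))).f2 := by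
    refine (injective_iff_map_eq_one _).mpr ?_
    intro w hw
    have h7 : (L.map (pbSnd α (L.ell Q))).f2 w = 1 := by
      apply hLℓQbij.2.1
      rw [← hsq2, hw, map_one, map_one]
    have h8 : w ∈ (L.map (kerIncl (pbSnd α (L.ell Q)))).f2.range := by
      rw [hk1G]
      exact h7
    obtain ⟨y, rfl⟩ := h8
    have h9 : (L.map (pbKerToKer α (L.ell Q))).f2 y = 1 := by
      apply hκinj2
      rw [map_one, ← hbk2 y]
      exact hw
    have h10 : y = 1 := by
      apply hθbij.2.1
      rw [h9, map_one]
    rw [h10, map_one]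
  obtain ⟨binv, hb1, hb2⟩ := XModHom.isIso_of_bijective (L.map (pbFst α (L.ell Q)))
    ⟨hinj1, hsurj1⟩ ⟨hinj2, hsurj2⟩
  have hb2p1 : ∀ z, (L.map (pbFst α (L.ell Q))).f1 (binv.f1 z) = z :=
    fun z => XModHom.congr_f1 hb2 z
  have hb2p2 : ∀ z, (L.map (pbFst α (L.ell Q))).f2 (binv.f2 z) = z :=
    fun z => XModHom.congr_f2 hb2 z
  refine ⟨hsqL, ?_⟩
  intro W u v huv
  have huv1 : ∀ x, (L.map α).f1 (u.f1 x) = (L.map (L.ell Q)).f1 (v.f1 x) :=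
    fun x => XModHom.congr_f1 huv x
  have huv2 : ∀ x, (L.map α).f2 (u.f2 x) = (L.map (L.ell Q)).f2 (v.f2 x) :=
    fun x => XModHom.congr_f2 huv x
  refine ⟨XModHom.comp binv u, ⟨?_, ?_⟩, ?_⟩
  · rw [← XModHom.comp_assoc', hb2, XModHom.id_comp']
  · refine XModHom.ext (MonoidHom.ext fun x => ?_) (MonoidHom.ext fun x => ?_)
    · apply hLℓQbij.1.1
      show (L.map (L.ell Q)).f1 ((L.map (pbSnd α (L.ell Q))).f1 (binv.f1 (u.f1 x))) =
        (L.map (L.ell Q)).f1 (v.f1 x)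
      rw [← hsq1, hb2p1]
      exact huv1 x
    · apply hLℓQbij.2.1
      show (L.map (L.ell Q)).f2 ((L.map (pbSnd α (L.ell Q))).f2 (binv.f2 (u.f2 x))) =
        (L.map (L.ell Q)).f2 (v.f2 x)
      rw [← hsq2, hb2p2]
      exact huv2 x
  · rintro w' ⟨hw1, -⟩
    calc w' = XModHom.comp (XModHom.id _) w' := (XModHom.id_comp' _).symm
    _ = XModHom.comp (XModHom.comp binv (L.map (pbFst α (L.ell Q)))) w' := by rw [hb1]
    _ = XModHom.comp binv (XModHom.comp (L.map (pbFst α (L.ell Q))) w') :=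
        XModHom.comp_assoc' _ _ _
    _ = XModHom.comp binv u := by rw [hw1]
end

section
/- The functor I : XMod → XMod, sending a crossed module (N₁, N₂, ∂) to (N₂, N₂, id) with coaugmentation the morphism (∂, id_{N₂}), is a localization functor that is not a regular-epi localization but is conditionally flat (and hence admissible for the class of regular epimorphisms). -/
set_option linter.unusedVariables false

/-- The crossed module `(H, H, id)` with `H` acting on itself by conjugation. -/
@[reducible] def conjXMod (H : Type) [Group H] : XMod where
  M := H
  G := H
  act := MulAut.conj
  d := MonoidHom.id H
  act_d := by intro b t; simp [MulAut.conj_apply]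
  peiffer := by intro t s; simp [MulAut.conj_apply]

/-- The localization functor `I` sending `(N₁, N₂, ∂)` to `(N₂, N₂, id)`, with
coaugmentation `(∂, id)`. -/
def IFun : LocalizationFunctor where
  obj X := conjXMod X.G
  map {A B} f :=
    { f1 := f.f2
      f2 := f.f2
      comm_d := fun _ => rfl
      equiv := by
        intro b n
        show f.f2 (b * n * b⁻¹) = f.f2 b * f.f2 n * (f.f2 b)⁻¹
        simp }
  map_id A := rfl
  map_comp f g := rfl
  ell A :=
    { f1 := A.d
      f2 := MonoidHom.id A.G
      comm_d := fun _ => rfl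
      equiv := by
        intro b n
        show A.d (A.act b n) = b * A.d n * b⁻¹
        exact A.act_d b n }
  natural {A B} f := by
    apply XModHom.ext
    · apply MonoidHom.ext
      intro a
      exact f.comm_d a
    · rfl
  iso_ell_obj A := by
    refine ⟨⟨MonoidHom.id A.G, MonoidHom.id A.G, fun _ => rfl, fun _ _ => rfl⟩, ?_, ?_⟩
    · apply XModHom.ext <;> rfl
    · apply XModHom.ext <;> rfl
  iso_map_ell A := by
    refine ⟨⟨MonoidHom.id A.G, MonoidHom.id A.G, fun _ => rfl, fun _ _ => rfl⟩, ?_, ?_⟩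
    · apply XModHom.ext <;> rfl
    · apply XModHom.ext <;> rfl

/-! ### Auxiliary material for Statement 14 -/

/-- Crossed module with trivial top group and an arbitrary bottom group. -/
def genXMod (H : Type) [Group H] : XMod where
  M := PUnit
  G := H
  act := 1
  d := 1
  act_d := by intro b t; simp
  peiffer := by intro t s; exact Subsingleton.elim _ _

/-- A group homomorphism `H →* X.G` induces a morphism `genXMod H → X`. -/
def genHom {H : Type} [Group H] (X : XMod) (h : H →* X.G) :
    XModHom (genXMod H) X where
  f1 := 1
  f2 := h
  comm_d := by intro n; show X.d 1 = h 1; rw [map_one, map_one]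
  equiv := by intro b n; simp

theorem comp_triv_left {A B C : XMod} (f : XModHom B C) :
    XModHom.comp f (XModHom.triv A B) = XModHom.triv A C := by
  apply XModHom.ext <;> exact MonoidHom.ext fun x => by
    simp [XModHom.comp, XModHom.triv]

/-- Key extraction from `I`-flatness of a short exact sequence: `κ.f2` is
injective and its image contains the kernel of `α.f2`. -/
theorem kernel_facts {N T Q : XMod} (κ : XModHom N T) (α : XModHom T Q)
    (h : XModHom.IsKernelOf (IFun.map κ) (IFun.map α)) :
    Function.Injective κ.f2 ∧ ∀ t : T.G, α.f2 t = 1 → ∃ n, κ.f2 n = t := by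
  constructor
  · -- injectivity via uniqueness in the kernel property
    intro a b hab
    have key : ∀ c : N.G, κ.f2 c = 1 → c = 1 := by
      intro c hc
      obtain ⟨v, hv, huniq⟩ := h.2 (genXMod (Multiplicative ℤ))
        (XModHom.triv _ _) (comp_triv_left _)
      have hA : XModHom.comp (IFun.map κ)
          (genHom (conjXMod N.G) (zpowersHom _ c)) = XModHom.triv _ _ := by
        apply XModHom.ext
        · exact MonoidHom.ext fun x => by
            show κ.f2 1 = 1
            exact map_one _
        · exact MonoidHom.ext fun (x : Multiplicative ℤ) => by
            show κ.f2 (zpowersHom N.G c x) = 1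
            rw [zpowersHom_apply, map_zpow, hc, one_zpow]
      have e1 := huniq _ hA
      have e2 := huniq _ (comp_triv_left _)
      have h3 : genHom (conjXMod N.G) (zpowersHom _ c) =
          XModHom.triv (genXMod (Multiplicative ℤ)) (conjXMod N.G) :=
        e1.trans e2.symm
      have h4 := DFunLike.congr_fun (congrArg XModHom.f2 h3) (Multiplicative.ofAdd (1 : ℤ))
      have h5 : zpowersHom N.G c (Multiplicative.ofAdd (1 : ℤ)) = 1 := h4
      rw [zpowersHom_apply, toAdd_ofAdd, zpow_one] at h5
      exact h5
    have h6 : κ.f2 (a * b⁻¹) = 1 := by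
      rw [map_mul, map_inv, hab, mul_inv_cancel]
    exact mul_inv_eq_one.mp (key _ h6)
  · intro t ht
    have hA : XModHom.comp (IFun.map α)
        (genHom (conjXMod T.G) (zpowersHom _ t)) = XModHom.triv _ _ := by
      apply XModHom.ext
      · exact MonoidHom.ext fun x => by
          show α.f2 1 = 1
          exact map_one _
      · exact MonoidHom.ext fun (x : Multiplicative ℤ) => by
          show α.f2 (zpowersHom T.G t x) = 1
          rw [zpowersHom_apply, map_zpow, ht, one_zpow]
    obtain ⟨v, hv, -⟩ := h.2 _ _ hA
    refine ⟨v.f2 (Multiplicative.ofAdd (1 : ℤ)), ?_⟩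
    have h4 := DFunLike.congr_fun (congrArg XModHom.f2 hv) (Multiplicative.ofAdd (1 : ℤ))
    have h5 : κ.f2 (v.f2 (Multiplicative.ofAdd (1 : ℤ))) =
        zpowersHom T.G t (Multiplicative.ofAdd (1 : ℤ)) := h4
    rw [zpowersHom_apply, toAdd_ofAdd, zpow_one] at h5
    exact h5

/-- Lift a homomorphism landing in the kernel of `α.f2` through `κ.f2`. -/
noncomputable def liftKer {N T Q : XMod} (κ : XModHom N T) (α : XModHom T Q)
    (inj : Function.Injective κ.f2)
    (sur : ∀ t : T.G, α.f2 t = 1 → ∃ n, κ.f2 n = t)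
    {X : Type} [Group X] (u : X →* T.G) (hu : ∀ x, α.f2 (u x) = 1) :
    X →* N.G where
  toFun x := (sur (u x) (hu x)).choose
  map_one' := inj (by
    rw [(sur (u 1) (hu 1)).choose_spec, map_one, map_one])
  map_mul' a b := inj (by
    rw [map_mul κ.f2, (sur (u (a*b)) (hu (a*b))).choose_spec,
      (sur (u a) (hu a)).choose_spec, (sur (u b) (hu b)).choose_spec, map_mul])

theorem liftKer_spec {N T Q : XMod} (κ : XModHom N T) (α : XModHom T Q)
    (inj : Function.Injective κ.f2)
    (sur : ∀ t : T.G, α.f2 t = 1 → ∃ n, κ.f2 n = t)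
    {X : Type} [Group X] (u : X →* T.G) (hu : ∀ x, α.f2 (u x) = 1) (x : X) :
    κ.f2 (liftKer κ α inj sur u hu x) = u x :=
  (sur (u x) (hu x)).choose_spec

theorem IFun_not_regepiloc : ¬ IFun.RegEpiLoc := by
  intro h
  obtain ⟨hs1, -⟩ := h (genXMod (Multiplicative ℤ))
  obtain ⟨p, hp⟩ := hs1 (Multiplicative.ofAdd (1 : ℤ))
  have hp' : (1 : Multiplicative ℤ) = Multiplicative.ofAdd (1 : ℤ) := hp
  have h0 : (1 : ℤ) = 0 := by simpa using hp'.symm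
  exact one_ne_zero h0

theorem IFun_cflat : IFun.ConditionallyFlat := by
  intro N T Q κ α hse hflat Q' g
  obtain ⟨inj, sur⟩ := kernel_facts κ α hflat.1
  obtain ⟨⟨hcomp, -⟩, hreg⟩ := hse
  constructor
  · constructor
    · -- composite is trivial
      apply XModHom.ext <;> exact MonoidHom.ext fun n => rfl
    · intro X u hu
      let U1 : X.M →* ↥(pbG α g) := u.f1
      let U2 : X.G →* ↥(pbG α g) := u.f2
      have hu1 : ∀ x : X.M, ((U1 x : T.G × Q'.G)).2 = 1 := fun x =>
        DFunLike.congr_fun (congrArg XModHom.f1 hu) x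
      have hu2 : ∀ x : X.G, ((U2 x : T.G × Q'.G)).2 = 1 := fun x =>
        DFunLike.congr_fun (congrArg XModHom.f2 hu) x
      -- first-coordinate homomorphisms
      set u1 : X.M →* T.G :=
        (MonoidHom.fst T.G Q'.G).comp ((pbG α g).subtype.comp U1) with hu1def
      set u2 : X.G →* T.G :=
        (MonoidHom.fst T.G Q'.G).comp ((pbG α g).subtype.comp U2) with hu2def
      have hku1 : ∀ x, α.f2 (u1 x) = 1 := by
        intro x
        have hm : α.f2 ((U1 x : T.G × Q'.G)).1 = g.f2 ((U1 x : T.G × Q'.G)).2 :=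
          (U1 x).2
        show α.f2 ((U1 x : T.G × Q'.G)).1 = 1
        rw [hm, hu1 x, map_one]
      have hku2 : ∀ x, α.f2 (u2 x) = 1 := by
        intro x
        have hm : α.f2 ((U2 x : T.G × Q'.G)).1 = g.f2 ((U2 x : T.G × Q'.G)).2 :=
          (U2 x).2
        show α.f2 ((U2 x : T.G × Q'.G)).1 = 1
        rw [hm, hu2 x, map_one]
      set v1 := liftKer κ α inj sur u1 hku1 with hv1def
      set v2 := liftKer κ α inj sur u2 hku2 with hv2def
      refine ⟨⟨v1, v2, ?_, ?_⟩, ?_, ?_⟩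
      · -- comm_d
        intro x
        apply inj
        show κ.f2 (v1 x) = κ.f2 (v2 (X.d x))
        rw [liftKer_spec, liftKer_spec]
        exact congrArg (fun p : ↥(pbG α g) => (p : T.G × Q'.G).1) (u.comm_d x)
      · -- equivariance
        intro b x
        apply inj
        show κ.f2 (v1 (X.act b x)) = κ.f2 (v2 b * v1 x * (v2 b)⁻¹)
        rw [map_mul, map_mul, map_inv, liftKer_spec, liftKer_spec, liftKer_spec]
        have he := congrArg (fun p : ↥(pbG α g) => (p : T.G × Q'.G).1) (u.equiv b x)
        exact he
      · -- factorization
        apply XModHom.ext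
        · apply MonoidHom.ext
          intro x
          apply Subtype.ext
          apply Prod.ext
          · exact liftKer_spec κ α inj sur u1 hku1 x
          · exact (hu1 x).symm
        · apply MonoidHom.ext
          intro x
          apply Subtype.ext
          apply Prod.ext
          · exact liftKer_spec κ α inj sur u2 hku2 x
          · exact (hu2 x).symm
      · -- uniqueness
        rintro v' hv'
        apply XModHom.ext
        · apply MonoidHom.ext
          intro x
          apply inj
          have h1 := congrArg (fun p : ↥(pbG α g) => (p : T.G × Q'.G).1)
            (DFunLike.congr_fun (congrArg XModHom.f1 hv') x)
          show κ.f2 (v'.f1 x) = κ.f2 (v1 x)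
          rw [liftKer_spec]
          exact h1
        · apply MonoidHom.ext
          intro x
          apply inj
          have h1 := congrArg (fun p : ↥(pbG α g) => (p : T.G × Q'.G).1)
            (DFunLike.congr_fun (congrArg XModHom.f2 hv') x)
          show κ.f2 (v'.f2 x) = κ.f2 (v2 x)
          rw [liftKer_spec]
          exact h1
  · -- regular epi
    have hsur : Function.Surjective α.f2 := hreg.2
    have key : Function.Surjective (pbSnd α g).f2 := by
      intro q
      obtain ⟨t, ht⟩ := hsur (g.f2 q)
      exact ⟨⟨(t, q), ht⟩, rfl⟩
    exact ⟨key, key⟩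

theorem IFun_adm : IFun.Admissible := by
  intro T Q α hα
  constructor
  · apply XModHom.ext <;> exact MonoidHom.ext fun w => w.2
  · intro W u v huv
    have huv1 : ∀ x : W.M, α.f2 (u.f1 x) = v.f1 x := fun x =>
      DFunLike.congr_fun (congrArg XModHom.f1 huv) x
    have huv2 : ∀ x : W.G, α.f2 (u.f2 x) = v.f2 x := fun x =>
      DFunLike.congr_fun (congrArg XModHom.f2 huv) x
    let w1 : W.M →* ↥(pbG α (IFun.ell Q)) :=
      { toFun := fun x => ⟨(u.f1 x, v.f1 x), huv1 x⟩
        map_one' := by apply Subtype.ext; apply Prod.ext <;> simp <;> rfl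
        map_mul' := by intro a b; apply Subtype.ext; apply Prod.ext <;> simp <;> rfl }
    let w2 : W.G →* ↥(pbG α (IFun.ell Q)) :=
      { toFun := fun x => ⟨(u.f2 x, v.f2 x), huv2 x⟩
        map_one' := by apply Subtype.ext; apply Prod.ext <;> simp <;> rfl
        map_mul' := by intro a b; apply Subtype.ext; apply Prod.ext <;> simp <;> rfl }
    refine ⟨⟨w1, w2, ?_, ?_⟩, ⟨?_, ?_⟩, ?_⟩
    · -- comm_d
      intro x
      apply Subtype.ext
      apply Prod.ext
      · exact u.comm_d x
      · exact v.comm_d x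
    · -- equivariance
      intro b x
      apply Subtype.ext
      apply Prod.ext
      · exact u.equiv b x
      · exact v.equiv b x
    · apply XModHom.ext <;> exact MonoidHom.ext fun x => rfl
    · apply XModHom.ext <;> exact MonoidHom.ext fun x => rfl
    · rintro w' ⟨hw1, hw2⟩
      apply XModHom.ext
      · apply MonoidHom.ext
        intro x
        apply Subtype.ext
        apply Prod.ext
        · exact DFunLike.congr_fun (congrArg XModHom.f1 hw1) x
        · exact DFunLike.congr_fun (congrArg XModHom.f1 hw2) x
      · apply MonoidHom.ext
        intro x
        apply Subtype.ext
        apply Prod.ext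
        · exact DFunLike.congr_fun (congrArg XModHom.f2 hw1) x
        · exact DFunLike.congr_fun (congrArg XModHom.f2 hw2) x

/-- The localization functor `I : XMod → XMod` (constructed
above), sending `(N₁, N₂, ∂)` to `(N₂, N₂, id)` with coaugmentation
`(∂, id)`, is not a regular-epi localization but is conditionally flat, and
hence admissible for the class of regular epimorphisms. -/
theorem IFun_not_regepi_but_conditionally_flat :
    ¬ IFun.RegEpiLoc ∧ IFun.ConditionallyFlat ∧ IFun.Admissible :=
  ⟨IFun_not_regepiloc, IFun_cflat, IFun_adm⟩
end
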